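/- arXiv:2107.09233 — 8 statements merged into one kernel-verified Lean document; each statement's English description precedes it below -/
import Mathlib

section
/- A k-uniform hypergraph on n vertices with at most β·n^k/k! edges contains at most β^((k+1)/k)·n^(k+1)/(k+1)! simplices, where a simplex is a set of k+1 vertices all of whose k-element subsets are edges. -/
open scoped Real
open Finset

namespace KKaux

variable {V : Type*} [Fintype V] [DecidableEq V]

/-- Delete coordinate `i` from a tuple. -/
def del {d : ℕ} (i : Fin (d + 1)) (f : Fin (d + 1) → V) : Fin d → V :=
  f ∘ i.succAbove

/-- Normalized multi-factor Hölder inequality, proved via weighted AM–GM. -/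
lemma holder_aux {α : Type*} (s : Finset α) (r : ℕ) (hr : 0 < r)
    (f : Fin r → α → ℝ) (hf : ∀ i x, 0 ≤ f i x) :
    ∑ x ∈ s, ∏ i, f i x ^ ((r : ℝ)⁻¹) ≤ ∏ i, (∑ x ∈ s, f i x) ^ ((r : ℝ)⁻¹) := by
  have hrR : ((r : ℝ)) ≠ 0 := Nat.cast_ne_zero.2 hr.ne'
  have hrinv : ((r : ℝ)⁻¹) ≠ 0 := inv_ne_zero hrR
  set B : Fin r → ℝ := fun i => ∑ x ∈ s, f i x with hB
  have hBnonneg : ∀ i, 0 ≤ B i := fun i => Finset.sum_nonneg fun x _ => hf i x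
  by_cases hz : ∃ i, B i = 0
  · obtain ⟨i0, h0⟩ := hz
    have hall : ∀ x ∈ s, f i0 x = 0 := by
      intro x hx
      exact (Finset.sum_eq_zero_iff_of_nonneg fun y _ => hf i0 y).1 h0 x hx
    have hL : ∑ x ∈ s, ∏ i, f i x ^ ((r : ℝ)⁻¹) = 0 := by
      refine Finset.sum_eq_zero fun x hx => ?_
      refine Finset.prod_eq_zero (Finset.mem_univ i0) ?_
      rw [hall x hx, Real.zero_rpow hrinv]
    have hR : ∏ i, (B i) ^ ((r : ℝ)⁻¹) = 0 := by
      refine Finset.prod_eq_zero (Finset.mem_univ i0) ?_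
      rw [h0, Real.zero_rpow hrinv]
    rw [hL, hR]
  · push_neg at hz
    have key : ∀ x ∈ s, ∏ i, f i x ^ ((r : ℝ)⁻¹)
        ≤ (∏ i, (B i) ^ ((r : ℝ)⁻¹)) * ∑ i, (r : ℝ)⁻¹ * (f i x / B i) := by
      intro x hx
      have hgm := Real.geom_mean_le_arith_mean_weighted Finset.univ
        (fun _ : Fin r => (r : ℝ)⁻¹) (fun i => f i x / B i)
        (fun i _ => by positivity)
        (by simp [Finset.card_univ, mul_inv_cancel₀ hrR])
        (fun i _ => div_nonneg (hf i x) (hBnonneg i))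
      have hfac : ∏ i, f i x ^ ((r : ℝ)⁻¹)
          = (∏ i, (B i) ^ ((r : ℝ)⁻¹)) * ∏ i, (f i x / B i) ^ ((r : ℝ)⁻¹) := by
        rw [← Finset.prod_mul_distrib]
        refine Finset.prod_congr rfl fun i _ => ?_
        rw [← Real.mul_rpow (hBnonneg i) (div_nonneg (hf i x) (hBnonneg i))]
        rw [mul_div_cancel₀ _ (hz i)]
      rw [hfac]
      exact mul_le_mul_of_nonneg_left hgm
        (Finset.prod_nonneg fun i _ => Real.rpow_nonneg (hBnonneg i) _)
    calc ∑ x ∈ s, ∏ i, f i x ^ ((r : ℝ)⁻¹)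
        ≤ ∑ x ∈ s, (∏ i, (B i) ^ ((r : ℝ)⁻¹)) * ∑ i, (r : ℝ)⁻¹ * (f i x / B i) :=
          Finset.sum_le_sum key
      _ = (∏ i, (B i) ^ ((r : ℝ)⁻¹)) * ∑ x ∈ s, ∑ i, (r : ℝ)⁻¹ * (f i x / B i) := by
          rw [← Finset.mul_sum]
      _ = ∏ i, (B i) ^ ((r : ℝ)⁻¹) := by
          rw [Finset.sum_comm]
          have heach : ∀ i : Fin r, ∑ x ∈ s, (r : ℝ)⁻¹ * (f i x / B i) = (r : ℝ)⁻¹ := by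
            intro i
            rw [← Finset.mul_sum, ← Finset.sum_div]
            have : (∑ x ∈ s, f i x) = B i := rfl
            rw [this, div_self (hz i), mul_one]
          rw [Finset.sum_congr rfl fun i _ => heach i]
          simp [Finset.card_univ, mul_inv_cancel₀ hrR]

lemma card_le_mul_eval {d : ℕ} (A : Finset (Fin (d + 1) → V)) (i : Fin (d + 1)) :
    A.card ≤ (A.image (del i)).card * (A.image fun f => f i).card := by
  classical
  rw [← Finset.card_product]
  refine Finset.card_le_card_of_injOn (fun f => (del i f, f i)) ?_ ?_
  · intro f hf
    exact Finset.mk_mem_product (Finset.mem_image_of_mem _ hf)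
      (Finset.mem_image_of_mem _ hf)
  · intro f _ g _ h
    have h1 : del i f = del i g := (Prod.ext_iff.1 h).1
    have h2 : f i = g i := (Prod.ext_iff.1 h).2
    funext j
    rcases eq_or_ne j i with rfl | hj
    · exact h2
    · obtain ⟨t, ht⟩ := Fin.exists_succAbove_eq hj
      have := congrFun h1 t
      simpa [del, ht] using this

lemma image_del_last_injOn {d : ℕ} (A : Finset (Fin (d + 2) → V)) (x : V) :
    Set.InjOn (del (Fin.last (d + 1)))
      ((A.filter fun f => f (Fin.last (d + 1)) = x : Finset (Fin (d + 2) → V)) :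
        Set (Fin (d + 2) → V)) := by
  intro f hf g hg h
  simp only [Finset.coe_filter, Set.mem_setOf_eq] at hf hg
  funext j
  induction j using Fin.lastCases with
  | last => rw [hf.2, hg.2]
  | cast j =>
    have := congrFun h j
    simpa [del, Fin.succAbove_last] using this

/-- Discrete Loomis–Whitney inequality. -/
lemma loomis_whitney : ∀ d : ℕ, 0 < d → ∀ A : Finset (Fin (d + 1) → V),
    (A.card : ℝ) ^ d ≤ ∏ i : Fin (d + 1), ((A.image (del i)).card : ℝ) := by
  intro d
  induction d with
  | zero => intro h; exact absurd h (lt_irrefl 0)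
  | succ d ih =>
    intro _ A
    rcases Nat.eq_zero_or_pos d with rfl | hd
    · -- base case : A ⊆ (Fin 2 → V)
      rw [Fin.prod_univ_two, pow_one]
      have h01 : ((A.image fun f => f (0 : Fin 2)).card : ℝ)
          = ((A.image (del (1 : Fin 2))).card : ℝ) := by
        have hinj : Function.Injective (fun g : Fin 1 → V => g 0) := by
          intro a b hab
          funext t
          have : t = 0 := Subsingleton.elim _ _
          rw [this]; exact hab
        have himg : (A.image (del (1 : Fin 2))).image (fun g : Fin 1 → V => g 0)
            = A.image fun f => f (0 : Fin 2) := by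
          rw [Finset.image_image]
          refine Finset.image_congr fun f _ => ?_
          show del (1 : Fin 2) f 0 = f 0
          have h1 : (1 : Fin 2) = Fin.last 1 := rfl
          simp [del, h1, Fin.succAbove_last]
        rw [← himg, Finset.card_image_of_injective _ hinj]
      rw [← h01]
      exact_mod_cast card_le_mul_eval A 0
    · -- inductive step
      set L : Fin (d + 2) := Fin.last (d + 1) with hL
      set D : ℝ := ((A.image (del L)).card : ℝ) with hD
      have hDnn : 0 ≤ D := by rw [hD]; positivity
      set P : Fin (d + 1) → Finset (Fin (d + 1) → V) :=
        fun i => A.image (del i.castSucc) with hP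
      set b : Fin (d + 1) → V → ℝ :=
        fun i x => (((P i).filter fun g => g (Fin.last d) = x).card : ℝ) with hb
      set Ax : V → Finset (Fin (d + 2) → V) :=
        fun x => A.filter fun f => f L = x with hAx
      set A' : V → Finset (Fin (d + 1) → V) :=
        fun x => (Ax x).image (del L) with hA'
      have hbnn : ∀ i x, 0 ≤ b i x := fun i x => by simp only [hb]; positivity
      have hcard : ∀ x, ((A' x).card : ℝ) = ((Ax x).card : ℝ) := by
        intro x
        simp only [hA', hAx]
        norm_cast
        exact Finset.card_image_of_injOn (image_del_last_injOn A x)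
      -- projections of slices are controlled by slices of projections
      have hproj : ∀ (x : V) (i : Fin (d + 1)),
          (((A' x).image (del i)).card : ℝ) ≤ b i x := by
        intro x i
        have hnat : ((A' x).image (del i)).card
            ≤ ((P i).filter fun g => g (Fin.last d) = x).card := by
          refine Finset.card_le_card_of_injOn
            (fun g : Fin d → V => (Fin.snoc g x : Fin (d + 1) → V)) ?_ ?_
          · intro g hg
            obtain ⟨g', hg', rfl⟩ := Finset.mem_image.1 hg
            simp only [hA'] at hg'
            obtain ⟨f, hf, rfl⟩ := Finset.mem_image.1 hg'
            simp only [hAx, Finset.mem_filter] at hf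
            obtain ⟨hfA, hfx⟩ := hf
            have hkey : (Fin.snoc (del i (del L f)) x : Fin (d + 1) → V)
                = del i.castSucc f := by
              funext j
              induction j using Fin.lastCases with
              | last =>
                rw [Fin.snoc_last]
                show x = f (i.castSucc.succAbove (Fin.last d))
                rw [Fin.succAbove_of_le_castSucc _ _
                  (Fin.castSucc_le_castSucc_iff.2 (Fin.le_last i)), Fin.succ_last]
                exact hfx.symm
              | cast j =>
                rw [Fin.snoc_castSucc]
                show del i (del L f) j = del i.castSucc f j.castSucc
                simp [del, hL, Fin.succAbove_last, Fin.castSucc_succAbove_castSucc]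
            refine Finset.mem_filter.2 ⟨?_, by simp⟩
            show (Fin.snoc (del i (del L f)) x : Fin (d + 1) → V) ∈ P i
            rw [hkey, hP]
            exact Finset.mem_image_of_mem _ hfA
          · intro g1 _ g2 _ h
            funext t
            have := congrFun h t.castSucc
            simpa [Fin.snoc_castSucc] using this
        simp only [hb]
        exact_mod_cast hnat
      have hsum_b : ∀ i : Fin (d + 1), ∑ x : V, b i x = ((P i).card : ℝ) := by
        intro i
        simp only [hb]
        have := Finset.card_eq_sum_card_fiberwise
          (f := fun g : Fin (d + 1) → V => g (Fin.last d)) (s := P i)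
          (t := Finset.univ) (fun g _ => Finset.mem_univ _)
        exact_mod_cast this.symm
      have hd1 : (d + 1 : ℕ) ≠ 0 := Nat.succ_ne_zero d
      -- pointwise bound
      have hpoint : ∀ x : V, ((Ax x).card : ℝ)
          ≤ D ^ (((d + 1 : ℕ) : ℝ)⁻¹) * ∏ i, b i x ^ (((d + 1 : ℕ) : ℝ)⁻¹) := by
        intro x
        have ha_nn : (0 : ℝ) ≤ ((A' x).card : ℝ) := by positivity
        have h1 : ((A' x).card : ℝ) ^ (d + 1) ≤ D * ∏ i, b i x := by
          have hD' : ((A' x).card : ℝ) ≤ D := by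
            simp only [hA', hD]
            have hsub : (Ax x).image (del L) ⊆ A.image (del L) :=
              Finset.image_subset_image (Finset.filter_subset _ _)
            exact_mod_cast Finset.card_le_card hsub
          have hpow : ((A' x).card : ℝ) ^ d ≤ ∏ i, b i x := by
            refine le_trans (ih hd (A' x)) ?_
            exact Finset.prod_le_prod (fun i _ => by positivity)
              (fun i _ => hproj x i)
          calc ((A' x).card : ℝ) ^ (d + 1)
              = ((A' x).card : ℝ) * ((A' x).card : ℝ) ^ d := by ring
            _ ≤ D * ∏ i, b i x := mul_le_mul hD' hpow (by positivity) hDnn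
        have h2 : ((A' x).card : ℝ)
            = (((A' x).card : ℝ) ^ (d + 1)) ^ (((d + 1 : ℕ) : ℝ)⁻¹) :=
          (Real.pow_rpow_inv_natCast ha_nn hd1).symm
        rw [← hcard, h2]
        calc (((A' x).card : ℝ) ^ (d + 1)) ^ (((d + 1 : ℕ) : ℝ)⁻¹)
            ≤ (D * ∏ i, b i x) ^ (((d + 1 : ℕ) : ℝ)⁻¹) := by
              refine Real.rpow_le_rpow (pow_nonneg ha_nn _) h1 (by positivity)
          _ = D ^ (((d + 1 : ℕ) : ℝ)⁻¹) * ∏ i, b i x ^ (((d + 1 : ℕ) : ℝ)⁻¹) := by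
              rw [Real.mul_rpow hDnn (Finset.prod_nonneg fun i _ => hbnn i x),
                ← Real.finset_prod_rpow _ _ (fun i _ => hbnn i x)]
      -- sum over slices
      have hAcard : ((A.card : ℝ)) = ∑ x : V, ((Ax x).card : ℝ) := by
        simp only [hAx]
        exact_mod_cast Finset.card_eq_sum_card_fiberwise
          (f := fun f : Fin (d + 2) → V => f L) (s := A) (t := Finset.univ)
          (fun f _ => Finset.mem_univ _)
      have hsum := holder_aux (Finset.univ : Finset V) (d + 1) (Nat.succ_pos d) b hbnn
      have h5 : (A.card : ℝ)
          ≤ D ^ (((d + 1 : ℕ) : ℝ)⁻¹) * ∏ i, ((P i).card : ℝ) ^ (((d + 1 : ℕ) : ℝ)⁻¹) := by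
        rw [hAcard]
        calc ∑ x : V, ((Ax x).card : ℝ)
            ≤ ∑ x : V, D ^ (((d + 1 : ℕ) : ℝ)⁻¹) * ∏ i, b i x ^ (((d + 1 : ℕ) : ℝ)⁻¹) :=
              Finset.sum_le_sum fun x _ => hpoint x
          _ = D ^ (((d + 1 : ℕ) : ℝ)⁻¹) * ∑ x : V, ∏ i, b i x ^ (((d + 1 : ℕ) : ℝ)⁻¹) := by
              rw [← Finset.mul_sum]
          _ ≤ D ^ (((d + 1 : ℕ) : ℝ)⁻¹) * ∏ i, (∑ x : V, b i x) ^ (((d + 1 : ℕ) : ℝ)⁻¹) :=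
              mul_le_mul_of_nonneg_left hsum (Real.rpow_nonneg hDnn _)
          _ = D ^ (((d + 1 : ℕ) : ℝ)⁻¹) * ∏ i, ((P i).card : ℝ) ^ (((d + 1 : ℕ) : ℝ)⁻¹) := by
              refine congrArg _ (Finset.prod_congr rfl fun i _ => ?_)
              rw [hsum_b i]
      have hPnn : (0 : ℝ) ≤ ∏ i : Fin (d + 1), ((P i).card : ℝ) :=
        Finset.prod_nonneg fun i _ => by positivity
      have hXnn : (0 : ℝ) ≤ (∏ i : Fin (d + 1), ((P i).card : ℝ)) * D :=
        mul_nonneg hPnn hDnn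
      have hfin : D ^ (((d + 1 : ℕ) : ℝ)⁻¹) * ∏ i, ((P i).card : ℝ) ^ (((d + 1 : ℕ) : ℝ)⁻¹)
          = ((∏ i : Fin (d + 1), ((P i).card : ℝ)) * D) ^ (((d + 1 : ℕ) : ℝ)⁻¹) := by
        rw [Real.mul_rpow hPnn hDnn,
          ← Real.finset_prod_rpow _ _ (fun i _ => by positivity)]
        ring
      have hRHS : ∏ i : Fin (d + 2), ((A.image (del i)).card : ℝ)
          = (∏ i : Fin (d + 1), ((P i).card : ℝ)) * D := by
        rw [Fin.prod_univ_castSucc]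
      calc (A.card : ℝ) ^ (d + 1)
          ≤ ((((∏ i : Fin (d + 1), ((P i).card : ℝ)) * D)
                ^ (((d + 1 : ℕ) : ℝ)⁻¹)) : ℝ) ^ (d + 1) := by
            refine pow_le_pow_left₀ (Nat.cast_nonneg _) ?_ _
            rw [← hfin]; exact h5
        _ = (∏ i : Fin (d + 1), ((P i).card : ℝ)) * D :=
            Real.rpow_inv_natCast_pow hXnn hd1
        _ = ∏ i : Fin (d + 2), ((A.image (del i)).card : ℝ) := hRHS.symm

/-- Ordered tuples whose image lies in `F`. -/
def ordered (j : ℕ) (F : Finset (Finset V)) : Finset (Fin j → V) :=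
  Finset.univ.filter fun f => Function.Injective f ∧ Finset.image f Finset.univ ∈ F

lemma ordered_card (j : ℕ) (F : Finset (Finset V)) (hF : ∀ S ∈ F, S.card = j) :
    (ordered j F).card = F.card * j.factorial := by
  classical
  rw [Finset.card_eq_sum_card_fiberwise
    (f := fun f : Fin j → V => Finset.image f Finset.univ) (s := ordered j F) (t := F)
    (fun f hf => (Finset.mem_filter.1 hf).2.2)]
  have hfib : ∀ S ∈ F,
      ((ordered j F).filter fun f => Finset.image f Finset.univ = S).card = j.factorial := by
    intro S hS
    have hcardS : S.card = j := hF S hS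
    have e : ((ordered j F).filter fun f => Finset.image f Finset.univ = S)
        ≃ (Fin j ↪ {y // y ∈ S}) := by
      refine
        { toFun := fun p => ⟨fun t => ⟨p.1 t, ?_⟩, ?_⟩
          invFun := fun e => ⟨fun t => (e t : V), ?_⟩
          left_inv := ?_, right_inv := ?_ }
      · have himg := (Finset.mem_filter.1 p.2).2
        have hmem := Finset.mem_image_of_mem (p.1 : Fin j → V) (Finset.mem_univ t)
        rwa [himg] at hmem
      · intro a c hac
        have hinj := (Finset.mem_filter.1 (Finset.mem_filter.1 p.2).1).2.1
        exact hinj (congrArg Subtype.val hac)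
      · -- membership of invFun
        have einj : Function.Injective fun t => ((e t : V)) :=
          fun a c h => e.injective (Subtype.ext h)
        have himg : Finset.image (fun t => ((e t : V))) Finset.univ = S := by
          apply Finset.eq_of_subset_of_card_le
          · intro y hy
            obtain ⟨t, _, rfl⟩ := Finset.mem_image.1 hy
            exact (e t).2
          · rw [Finset.card_image_of_injective _ einj, Finset.card_univ,
              Fintype.card_fin, hcardS]
        refine Finset.mem_filter.2 ⟨Finset.mem_filter.2 ⟨Finset.mem_univ _, einj, ?_⟩, himg⟩
        rw [himg]; exact hS
      · intro p; ext t; rfl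
      · intro e; ext t; rfl
    calc ((ordered j F).filter fun f => Finset.image f Finset.univ = S).card
        = Fintype.card ((ordered j F).filter
            fun f => Finset.image f Finset.univ = S) := (Fintype.card_coe _).symm
      _ = Fintype.card (Fin j ↪ {y // y ∈ S}) := Fintype.card_congr e
      _ = j.factorial := by
          rw [Fintype.card_embedding_eq, Fintype.card_fin, Fintype.card_coe, hcardS,
            Nat.descFactorial_self]
  rw [Finset.sum_congr rfl hfib, Finset.sum_const, smul_eq_mul]

end KKaux

open KKaux in
/-- Kruskal–Katona (simplex counting form): a `k`-uniform hypergraph on `n` vertices with at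
most `β·n^k/k!` edges contains at most `β^((k+1)/k)·n^(k+1)/(k+1)!` simplices. -/
theorem stmt_1 (k n : ℕ) (hk : 1 ≤ k) (V : Type*) [Fintype V] [DecidableEq V]
    (hV : Fintype.card V = n)
    (H : Finset (Finset V)) (huni : ∀ e ∈ H, e.card = k)
    (β : ℝ) (hβ : 0 ≤ β)
    (hH : (H.card : ℝ) ≤ β * (n : ℝ) ^ k / (Nat.factorial k : ℝ)) :
    ({S : Finset V | S.card = k + 1 ∧ ∀ T ⊆ S, T.card = k → T ∈ H}.ncard : ℝ)
      ≤ β ^ (((k : ℝ) + 1) / (k : ℝ)) * (n : ℝ) ^ (k + 1) / (Nat.factorial (k + 1) : ℝ) := by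
  classical
  have hkpos : 0 < k := hk
  have hkne : k ≠ 0 := hkpos.ne'
  have hkR : ((k : ℝ)) ≠ 0 := Nat.cast_ne_zero.2 hkne
  have hnnn : (0 : ℝ) ≤ (n : ℝ) := Nat.cast_nonneg n
  -- the simplices as a finset
  set 𝒮 : Finset (Finset V) :=
    Finset.univ.filter (fun S => S.card = k + 1 ∧ ∀ T ⊆ S, T.card = k → T ∈ H) with h𝒮
  have hset : {S : Finset V | S.card = k + 1 ∧ ∀ T ⊆ S, T.card = k → T ∈ H}
      = (𝒮 : Set (Finset V)) := by
    ext S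
    simp [h𝒮]
  rw [hset, Set.ncard_coe_finset]
  -- ordered simplices and edges
  have h𝒮sized : ∀ S ∈ 𝒮, S.card = k + 1 := by
    intro S hS
    exact (Finset.mem_filter.1 hS).2.1
  have hA : (ordered (k + 1) 𝒮).card = 𝒮.card * (k + 1).factorial :=
    ordered_card (k + 1) 𝒮 h𝒮sized
  have hE : (ordered k H).card = H.card * k.factorial :=
    ordered_card k H huni
  -- projections of ordered simplices are ordered edges
  have hsub : ∀ i : Fin (k + 1),
      (ordered (k + 1) 𝒮).image (del i) ⊆ ordered k H := by
    intro i g hg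
    obtain ⟨f, hf, rfl⟩ := Finset.mem_image.1 hg
    obtain ⟨-, hfinj, hfmem⟩ := Finset.mem_filter.1 hf
    obtain ⟨-, hScard, hSsub⟩ := Finset.mem_filter.1 hfmem
    have hginj : Function.Injective (del i f) :=
      hfinj.comp (Fin.succAbove_right_injective (p := i))
    have himage : Finset.image i.succAbove Finset.univ
        = (Finset.univ : Finset (Fin (k + 1))).erase i := by
      apply Finset.eq_of_subset_of_card_le
      · intro j hj
        obtain ⟨t, _, rfl⟩ := Finset.mem_image.1 hj
        exact Finset.mem_erase.2 ⟨Fin.succAbove_ne i t, Finset.mem_univ _⟩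
      · rw [Finset.card_erase_of_mem (Finset.mem_univ i), Finset.card_univ,
          Finset.card_image_of_injective _ (Fin.succAbove_right_injective (p := i)),
          Finset.card_univ, Fintype.card_fin, Fintype.card_fin]
        omega
    have hTimg : Finset.image (del i f) Finset.univ
        = Finset.image f ((Finset.univ : Finset (Fin (k + 1))).erase i) := by
      show Finset.image (f ∘ i.succAbove) Finset.univ = _
      rw [← Finset.image_image, himage]
    have hTsub : Finset.image (del i f) Finset.univ ⊆ Finset.image f Finset.univ := by
      rw [hTimg]
      exact Finset.image_subset_image (Finset.erase_subset _ _)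
    have hTcard : (Finset.image (del i f) Finset.univ).card = k := by
      rw [Finset.card_image_of_injective _ hginj, Finset.card_univ, Fintype.card_fin]
    refine Finset.mem_filter.2 ⟨Finset.mem_univ _, hginj, ?_⟩
    exact hSsub _ hTsub hTcard
  -- Loomis–Whitney / Shearer
  have hshear : ((ordered (k + 1) 𝒮).card : ℝ) ^ k ≤ ((ordered k H).card : ℝ) ^ (k + 1) := by
    calc ((ordered (k + 1) 𝒮).card : ℝ) ^ k
        ≤ ∏ i : Fin (k + 1), (((ordered (k + 1) 𝒮).image (del i)).card : ℝ) :=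
          loomis_whitney k hkpos _
      _ ≤ ∏ i : Fin (k + 1), ((ordered k H).card : ℝ) := by
          refine Finset.prod_le_prod (fun i _ => by positivity) fun i _ => ?_
          exact_mod_cast Finset.card_le_card (hsub i)
      _ = ((ordered k H).card : ℝ) ^ (k + 1) := by
          rw [Finset.prod_const, Finset.card_univ, Fintype.card_fin]
  -- numeric conclusion
  have hEbound : ((H.card : ℝ)) * (k.factorial : ℝ) ≤ β * (n : ℝ) ^ k := by
    have hfk : (0 : ℝ) < (k.factorial : ℝ) := by
      exact_mod_cast k.factorial_pos
    exact (le_div_iff₀ hfk).1 hH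
  have hXnn : (0 : ℝ) ≤ (𝒮.card : ℝ) * ((k + 1).factorial : ℝ) := by positivity
  have hYnn : (0 : ℝ) ≤ β * (n : ℝ) ^ k := by positivity
  have h7 : ((𝒮.card : ℝ) * ((k + 1).factorial : ℝ)) ^ k ≤ (β * (n : ℝ) ^ k) ^ (k + 1) := by
    have h6 : ((𝒮.card : ℝ) * ((k + 1).factorial : ℝ)) ^ k
        ≤ ((H.card : ℝ) * (k.factorial : ℝ)) ^ (k + 1) := by
      have := hshear
      rw [hA, hE] at this
      exact_mod_cast this
    refine h6.trans ?_
    exact pow_le_pow_left₀ (by positivity) hEbound _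
  have h8 : (𝒮.card : ℝ) * ((k + 1).factorial : ℝ)
      ≤ (β * (n : ℝ) ^ k) ^ (((k : ℝ) + 1) / (k : ℝ)) := by
    have hmono := Real.rpow_le_rpow (by positivity) h7
      (inv_nonneg.2 (Nat.cast_nonneg k))
    rw [Real.pow_rpow_inv_natCast hXnn hkne] at hmono
    have hexp : (((β * (n : ℝ) ^ k) ^ (k + 1) : ℝ)) ^ (((k : ℝ))⁻¹)
        = (β * (n : ℝ) ^ k) ^ (((k : ℝ) + 1) / (k : ℝ)) := by
      rw [← Real.rpow_natCast (β * (n : ℝ) ^ k) (k + 1), ← Real.rpow_mul hYnn]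
      congr 1
      push_cast
      rw [div_eq_mul_inv]
    rwa [hexp] at hmono
  have h9 : (β * (n : ℝ) ^ k) ^ (((k : ℝ) + 1) / (k : ℝ))
      = β ^ (((k : ℝ) + 1) / (k : ℝ)) * (n : ℝ) ^ (k + 1) := by
    rw [Real.mul_rpow hβ (by positivity)]
    congr 1
    rw [← Real.rpow_natCast (n : ℝ) k, ← Real.rpow_mul hnnn]
    rw [show ((k : ℝ)) * (((k : ℝ) + 1) / (k : ℝ)) = ((k : ℝ) + 1) by
      field_simp]
    rw [show ((k : ℝ) + 1) = (((k + 1 : ℕ) : ℝ)) by push_cast; ring]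
    exact Real.rpow_natCast _ _
  have hfk1 : (0 : ℝ) < ((k + 1).factorial : ℝ) := by
    exact_mod_cast (k + 1).factorial_pos
  rw [le_div_iff₀ hfk1]
  calc (𝒮.card : ℝ) * ((k + 1).factorial : ℝ)
      ≤ (β * (n : ℝ) ^ k) ^ (((k : ℝ) + 1) / (k : ℝ)) := h8
    _ = β ^ (((k : ℝ) + 1) / (k : ℝ)) * (n : ℝ) ^ (k + 1) := h9
end

section
/- There are no real numbers x, y, z, a, b, c satisfying simultaneously: a + b·(3φ−1)/2 + c > 1, a + φ(b+c) > 1, x + y + z = 1, x² + 2xy + 2yz ≥ a+b+c, 2yz ≥ b, and a,b,c,x,y,z ≥ 0, where φ = 1909/1000. -/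
set_option maxHeartbeats 2000000 in
private lemma key_infeasible (x y z : ℝ) (hx : 0 ≤ x) (hy : 0 ≤ y) (hz : 0 ≤ z)
    (hs : x + y + z = 1)
    (h1 : 1 < (1909/1000 : ℝ) * (x^2 + 2*x*y + 2*y*z))
    (h2 : 1 < x^2 + 2*x*y + 2*y*z + 3*(1909/1000 - 1) * (y*z)) : False := by
  have hA : (0:ℝ) < 1909/1000 * (x^2 + 2*x*y + 2*y*z) - (x+y+z)^2 := by rw [hs]; linarith
  have hB : (0:ℝ) < x^2 + 2*x*y + 2*y*z + 3*(1909/1000 - 1) * (y*z) - (x+y+z)^2 := by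
    rw [hs]; linarith
  linarith [mul_pos hA hB,
    mul_nonneg (mul_nonneg hy hy) hA.le,
    mul_nonneg (mul_nonneg hx hz) hA.le,
    mul_nonneg (sq_nonneg (y - 2*z)) hA.le,
    mul_nonneg (mul_nonneg hy hy) hB.le,
    mul_nonneg (mul_nonneg hx hy) hB.le,
    mul_nonneg (mul_nonneg hx hz) hB.le,
    mul_nonneg (sq_nonneg (x + 2*y - 3*z)) hB.le,
    mul_nonneg (sq_nonneg (y - z)) hB.le,
    mul_nonneg (mul_nonneg hx hx) (sq_nonneg (4*y - 5*z)),
    pow_nonneg hz 4,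
    mul_nonneg (mul_nonneg hx hx) (sq_nonneg (y - 2*z)),
    mul_nonneg (mul_nonneg hx hy) (sq_nonneg (3*y - 4*z)),
    mul_nonneg (mul_nonneg hx hz) (sq_nonneg (3*y - 4*z))]

/-- The key semialgebraic infeasibility with φ = 1909/1000. -/
theorem stmt_3 :
    ¬ ∃ x y z a b c : ℝ,
      a + b * (3 * (1909 / 1000 : ℝ) - 1) / 2 + c > 1 ∧
      a + (1909 / 1000 : ℝ) * (b + c) > 1 ∧
      x + y + z = 1 ∧
      x ^ 2 + 2 * x * y + 2 * y * z ≥ a + b + c ∧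
      2 * y * z ≥ b ∧
      0 ≤ a ∧ 0 ≤ b ∧ 0 ≤ c ∧ 0 ≤ x ∧ 0 ≤ y ∧ 0 ≤ z := by
  rintro ⟨x, y, z, a, b, c, h1, h2, hs, h3, h4, ha, hb, hc, hx, hy, hz⟩
  by_cases hT : (1909/1000 : ℝ) * (x^2 + 2*x*y + 2*y*z) ≤ 1
  · -- a + φ(b+c) ≤ φ(a+b+c) ≤ φT ≤ 1, contradicting h2
    linarith
  by_cases hU : x^2 + 2*x*y + 2*y*z + 3*(1909/1000 - 1) * (y*z) ≤ 1
  · -- a + (3φ-1)/2·b + c ≤ (a+b+c) + (3φ-3)/2·b ≤ T + 3(φ-1)yz ≤ 1, contradicting h1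
    linarith
  exact key_infeasible x y z hx hy hz hs (not_le.1 hT) (not_le.1 hU)
end

section
/- For k ≥ 1, the 2-blowup of a pair of k-clauses on the same set of k variables is non-minimal. Concretely: if C₁ = v₁∧⋯∧v_k and C₂ = ¬v₁∧⋯∧¬v_j∧v_{j+1}∧⋯∧v_k with 1 ≤ j ≤ k, then in the formula on the 2k variables v₁,v₁′,…,v_k,v_k′ consisting of all clauses obtained from C₁ or C₂ by replacing each variable independently by itself or its primed copy, the clause v₁∧⋯∧v_k has no witness (no assignment satisfies it while falsifying all other clauses of the blowup). -/
/-- The 2-blowup of a pair of `k`-clauses on the same variable set is non-minimal: with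
`C₁ = v₁∧⋯∧v_k` and `C₂ = ¬v₁∧⋯∧¬v_j∧v_{j+1}∧⋯∧v_k` (`1 ≤ j ≤ k`), the clause
`v₁∧⋯∧v_k` has no witness in the blowup. Here `w i b` is the value of the copy `b` of
variable `i`, and a blowup clause is specified by a copy-selector `s : Fin k → Bool`. -/
theorem stmt_8 (k j : ℕ) (hj1 : 1 ≤ j) (hjk : j ≤ k) :
    ¬ ∃ w : Fin k → Bool → Bool,
      -- the chosen clause v₁∧⋯∧v_k (all unprimed copies) is satisfied
      (∀ i : Fin k, w i false = true) ∧
      -- every other blowup clause of C₁ is falsified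
      (∀ s : Fin k → Bool, (∃ i, s i = true) → ∃ i : Fin k, w i (s i) = false) ∧
      -- every blowup clause of C₂ is falsified
      (∀ s : Fin k → Bool,
        ∃ i : Fin k, w i (s i) ≠ (if (i : ℕ) < j then false else true)) := by
  rintro ⟨w, h1, h2, h3⟩
  have htrue : ∀ i : Fin k, w i true = false := by
    intro i
    obtain ⟨i', hi'⟩ := h2 (fun i' => decide (i' = i)) ⟨i, by simp⟩
    by_cases h : i' = i
    · subst h; simpa using hi'
    · simp [h, h1 i'] at hi'
  obtain ⟨i, hi⟩ := h3 (fun i => decide ((i : ℕ) < j))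
  by_cases h : (i : ℕ) < j
  · simp [h, htrue i] at hi
  · simp [h, h1 i] at hi
end

section
/- Let H′ be the 3-clause k-SAT formula with clauses C₁ = v₂∧v₃∧⋯∧v_{k+1}, C₂ containing the positive literal v₁ together with literals on variables v₂,…,v_k (of arbitrary polarity), and C₃ containing the negative literal ¬v₁ together with literals on variables v₂,…,v_{k−1},v_{k+1} (of arbitrary polarity). Then the 2-blowup H′[2] is non-minimal: no assignment satisfies the clause v₂∧v₃∧⋯∧v_{k+1} of H′[2] while falsifying all other clauses of H′[2]. -/
/-- The 2-blowup of the 3-clause formula `H'` (with `C₁ = v₂∧⋯∧v_{k+1}`, `C₂` containing the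
positive literal `v₁` and literals of polarities `ε` on `v₂,…,v_k`, and `C₃` containing the
negative literal `¬v₁` and literals of polarities `δ` on `v₂,…,v_{k−1},v_{k+1}`) is
non-minimal: no assignment satisfies the clause `v₂∧⋯∧v_{k+1}` of `H'[2]` while falsifying
all other clauses of `H'[2]`.  Variables are indexed by `Fin (k+1)` with index `0`
corresponding to `v₁` and index `i` to `v_{i+1}`; `w i b` is the value of copy `b` of
variable `i`, and blowup clauses are specified by copy-selectors `s`. -/
theorem stmt_9 (k : ℕ) (hk : 2 ≤ k) (ε δ : Fin (k + 1) → Bool) :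
    ¬ ∃ w : Fin (k + 1) → Bool → Bool,
      -- the chosen copy of C₁ (all unprimed copies) is satisfied
      (∀ i : Fin (k + 1), i ≠ 0 → w i false = true) ∧
      -- every other blowup clause of C₁ is falsified
      (∀ s : Fin (k + 1) → Bool, (∃ i : Fin (k + 1), i ≠ 0 ∧ s i = true) →
        ∃ i : Fin (k + 1), i ≠ 0 ∧ w i (s i) = false) ∧
      -- every blowup clause of C₂ is falsified
      (∀ s : Fin (k + 1) → Bool,
        ¬ (w 0 (s 0) = true ∧
            ∀ i : Fin (k + 1), 1 ≤ (i : ℕ) → (i : ℕ) ≤ k - 1 → w i (s i) = ε i)) ∧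
      -- every blowup clause of C₃ is falsified
      (∀ s : Fin (k + 1) → Bool,
        ¬ (w 0 (s 0) = false ∧
            (∀ i : Fin (k + 1), 1 ≤ (i : ℕ) → (i : ℕ) ≤ k - 2 → w i (s i) = δ i) ∧
            w (Fin.last k) (s (Fin.last k)) = δ (Fin.last k))) := by
  rintro ⟨w, h1, h2, h3, h4⟩
  have hw : ∀ i : Fin (k + 1), i ≠ 0 → w i true = false := by
    intro j hj
    obtain ⟨i, hi0, hif⟩ := h2 (fun i => if i = j then true else false) ⟨j, hj, by simp⟩
    by_cases hij : i = j
    · subst hij; simpa using hif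
    · rw [if_neg hij] at hif
      rw [h1 i hi0] at hif
      exact absurd hif (by simp)
  have key : ∀ i : Fin (k + 1), i ≠ 0 → ∀ c : Bool, w i (!c) = c := by
    intro i hi c
    cases c
    · simpa using hw i hi
    · simpa using h1 i hi
  have h0f : ∀ b, w 0 b = false := by
    intro b
    have h := h3 (fun i => if i = 0 then b else !(ε i))
    simp only [not_and] at h
    have hforall : ∀ i : Fin (k + 1), 1 ≤ (i : ℕ) → (i : ℕ) ≤ k - 1 →
        w i (if i = 0 then b else !(ε i)) = ε i := by
      intro i hi1 hi2
      have hi0 : i ≠ 0 := by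
        intro hh; rw [hh] at hi1; simp at hi1
      rw [if_neg hi0]; exact key i hi0 (ε i)
    by_contra hb
    have hb' : w 0 b = true := Bool.of_not_eq_false hb
    exact h (by simpa using hb') hforall
  have h0t : ∀ b, w 0 b = true := by
    intro b
    have h := h4 (fun i => if i = 0 then b else !(δ i))
    simp only [not_and] at h
    have hlast : Fin.last k ≠ 0 := by
      intro hh
      have : (Fin.last k : ℕ) = 0 := by rw [hh]; rfl
      rw [Fin.val_last] at this; omega
    have hforall : ∀ i : Fin (k + 1), 1 ≤ (i : ℕ) → (i : ℕ) ≤ k - 2 →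
        w i (if i = 0 then b else !(δ i)) = δ i := by
      intro i hi1 hi2
      have hi0 : i ≠ 0 := by
        intro hh; rw [hh] at hi1; simp at hi1
      rw [if_neg hi0]; exact key i hi0 (δ i)
    by_contra hb
    have hb' : w 0 b = false := Bool.of_not_eq_true hb
    exact h (by simpa using hb') hforall (by rw [if_neg hlast]; exact key _ hlast _)
  have := h0f true
  rw [h0t true] at this
  exact absurd this (by simp)
end

section
/- Fix k ≥ 3 and θ > 0. If every (n−1)-vertex T⃗_{k−1}-free partially directed (k−1)-graph H⃗′ satisfies α(H⃗′) + θ·β(H⃗′) ≤ π, then every n-vertex T⃗_k-free partially directed k-graph H⃗ satisfies α(H⃗) + ((k−1)θ+1)/k · β(H⃗) ≤ π, via averaging over vertex links. -/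
/-- A partially directed `k`-graph (k-PDG): a set of undirected edges (finsets of vertices)
together with a set of directed edges (a finset of vertices with a distinguished head). -/
structure PDG (V : Type*) where
  undirected : Finset (Finset V)
  directed : Finset (Finset V × V)

/-- Well-formedness of a `k`-PDG: all edges have `k` vertices, heads of directed edges lie in
their edge, and no two edges (directed or undirected) use the same `k`-set of vertices. -/
def PDG.IsValid {V : Type*} (H : PDG V) (k : ℕ) : Prop :=
  (∀ e ∈ H.undirected, e.card = k) ∧
  (∀ p ∈ H.directed, p.1.card = k ∧ p.2 ∈ p.1) ∧
  (∀ p ∈ H.directed, p.1 ∉ H.undirected) ∧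
  (∀ p ∈ H.directed, ∀ q ∈ H.directed, p.1 = q.1 → p = q)

/-- `S` supports an edge of `H` (directed or undirected); this is the underlying hypergraph,
forgetting directions. -/
def PDG.HasEdge {V : Type*} (H : PDG V) (S : Finset V) : Prop :=
  S ∈ H.undirected ∨ ∃ v, (S, v) ∈ H.directed

/-- `H` contains the generalized partially directed triangle `T⃗_k` as a subgraph: there are a
`(k−2)`-set `A` and distinct further vertices `a`, `b`, `w` such that `A∪{a,b}` and `A∪{b,w}`
support edges (of any kind, since directions may be forgotten) and `A∪{a,w}` supports an
edge directed at `w`. -/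
def PDG.ContainsT {V : Type*} [DecidableEq V] (H : PDG V) (k : ℕ) : Prop :=
  ∃ (A : Finset V) (a b w : V), A.card = k - 2 ∧
    a ∉ A ∧ b ∉ A ∧ w ∉ A ∧ a ≠ b ∧ a ≠ w ∧ b ≠ w ∧
    H.HasEdge (A ∪ {a, b}) ∧ (A ∪ {a, w}, w) ∈ H.directed ∧ H.HasEdge (A ∪ {b, w})

namespace StmtAux

variable {m : ℕ}

/-- Inverse of `Fin.succAbove v` (junk value at `v`). -/
def gv (v : Fin (m + 2)) (x : Fin (m + 2)) : Fin (m + 1) :=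
  (finSuccEquiv' v x).getD 0

lemma gv_succAbove (v : Fin (m + 2)) (j : Fin (m + 1)) : gv v (v.succAbove j) = j := by
  simp [gv]

lemma succAbove_gv (v : Fin (m + 2)) {x : Fin (m + 2)} (h : x ≠ v) :
    v.succAbove (gv v x) = x := by
  obtain ⟨j, rfl⟩ := Fin.exists_succAbove_eq h
  rw [gv_succAbove]

/-- The link image of an edge `e` containing `v`. -/
def lmap (v : Fin (m + 2)) (e : Finset (Fin (m + 2))) : Finset (Fin (m + 1)) :=
  (e.erase v).image (gv v)

lemma mem_lmap {v : Fin (m + 2)} {e : Finset (Fin (m + 2))} {j : Fin (m + 1)} :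
    j ∈ lmap v e ↔ v.succAbove j ∈ e := by
  constructor
  · intro hj
    simp only [lmap, Finset.mem_image] at hj
    obtain ⟨x, hx, rfl⟩ := hj
    rw [succAbove_gv v (Finset.ne_of_mem_erase hx)]
    exact Finset.mem_of_mem_erase hx
  · intro h
    exact Finset.mem_image.2 ⟨v.succAbove j,
      Finset.mem_erase.2 ⟨Fin.succAbove_ne v j, h⟩, gv_succAbove v j⟩

lemma lmap_inj {v : Fin (m + 2)} {e e' : Finset (Fin (m + 2))}
    (hv : v ∈ e) (hv' : v ∈ e') (h : lmap v e = lmap v e') : e = e' := by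
  ext x
  by_cases hx : x = v
  · subst hx; simp [hv, hv']
  · obtain ⟨j, rfl⟩ := Fin.exists_succAbove_eq hx
    rw [← mem_lmap, ← mem_lmap, h]

lemma image_lmap {v : Fin (m + 2)} {e : Finset (Fin (m + 2))} (hv : v ∈ e) :
    (lmap v e).image v.succAbove ∪ {v} = e := by
  ext x
  simp only [Finset.mem_union, Finset.mem_image, Finset.mem_singleton]
  constructor
  · rintro (⟨j, hj, rfl⟩ | rfl)
    · exact mem_lmap.1 hj
    · exact hv
  · intro hx
    by_cases hxv : x = v
    · exact Or.inr hxv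
    · obtain ⟨j, rfl⟩ := Fin.exists_succAbove_eq hxv
      exact Or.inl ⟨j, mem_lmap.2 hx, rfl⟩

lemma card_lmap {v : Fin (m + 2)} {e : Finset (Fin (m + 2))} (hv : v ∈ e) :
    (lmap v e).card = e.card - 1 := by
  rw [lmap, Finset.card_image_of_injOn, Finset.card_erase_of_mem hv]
  intro x hx y hy hxy
  rw [← succAbove_gv v (Finset.ne_of_mem_erase hx),
    ← succAbove_gv v (Finset.ne_of_mem_erase hy), hxy]

variable (H : PDG (Fin (m + 2)))

def linkU (v : Fin (m + 2)) : Finset (Finset (Fin (m + 1))) :=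
  ((H.undirected.filter (fun e => v ∈ e)).image (lmap v)) ∪
  ((H.directed.filter (fun p => p.2 = v)).image (fun p => lmap v p.1))

def linkD (v : Fin (m + 2)) : Finset (Finset (Fin (m + 1)) × Fin (m + 1)) :=
  (H.directed.filter (fun p => v ∈ p.1 ∧ p.2 ≠ v)).image (fun p => (lmap v p.1, gv v p.2))

def link (v : Fin (m + 2)) : PDG (Fin (m + 1)) := ⟨linkU H v, linkD H v⟩

variable {k : ℕ} (hk : 3 ≤ k) (hval : H.IsValid k)

include hval

lemma link_valid (v : Fin (m + 2)) : (link H v).IsValid (k - 1) := by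
  obtain ⟨h1, h2, h3, h4⟩ := hval
  refine ⟨?_, ?_, ?_, ?_⟩
  · intro e he
    rcases Finset.mem_union.1 he with he | he
    · obtain ⟨e', he', rfl⟩ := Finset.mem_image.1 he
      obtain ⟨he'u, hv⟩ := Finset.mem_filter.1 he'
      rw [card_lmap hv, h1 e' he'u]
    · obtain ⟨p, hp, rfl⟩ := Finset.mem_image.1 he
      obtain ⟨hpd, hv⟩ := Finset.mem_filter.1 hp
      have hvp : v ∈ p.1 := hv ▸ (h2 p hpd).2
      rw [card_lmap hvp, (h2 p hpd).1]
  · intro q hq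
    obtain ⟨p, hp, rfl⟩ := Finset.mem_image.1 hq
    obtain ⟨hpd, hv, hne⟩ := Finset.mem_filter.1 hp
    refine ⟨by rw [card_lmap hv, (h2 p hpd).1], ?_⟩
    exact mem_lmap.2 (by rw [succAbove_gv v hne]; exact (h2 p hpd).2)
  · intro q hq hqU
    obtain ⟨p, hp, rfl⟩ := Finset.mem_image.1 hq
    obtain ⟨hpd, hvp, hne⟩ := Finset.mem_filter.1 hp
    rcases Finset.mem_union.1 hqU with hU | hU
    · obtain ⟨e, he, heq⟩ := Finset.mem_image.1 hU
      obtain ⟨heu, hv⟩ := Finset.mem_filter.1 he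
      exact h3 p hpd ((lmap_inj hv hvp heq) ▸ heu)
    · obtain ⟨q', hq', heq⟩ := Finset.mem_image.1 hU
      obtain ⟨hq'd, hv'⟩ := Finset.mem_filter.1 hq'
      have hvq : v ∈ q'.1 := hv' ▸ (h2 q' hq'd).2
      have hpq : q' = p := h4 q' hq'd p hpd (lmap_inj hvq hvp heq)
      exact hne (by rw [← hpq]; exact hv')
  · intro q hq q' hq' heq
    obtain ⟨p, hp, rfl⟩ := Finset.mem_image.1 hq
    obtain ⟨hpd, hvp, _⟩ := Finset.mem_filter.1 hp
    obtain ⟨p', hp', rfl⟩ := Finset.mem_image.1 hq'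
    obtain ⟨hp'd, hvp', _⟩ := Finset.mem_filter.1 hp'
    have : p = p' := h4 p hpd p' hp'd (lmap_inj hvp hvp' heq)
    rw [this]

lemma link_hasEdge {v : Fin (m + 2)} {S : Finset (Fin (m + 1))}
    (h : (link H v).HasEdge S) : H.HasEdge (S.image v.succAbove ∪ {v}) := by
  rcases h with hS | ⟨h', hS⟩
  · rcases Finset.mem_union.1 hS with hS | hS
    · obtain ⟨e, he, rfl⟩ := Finset.mem_image.1 hS
      obtain ⟨heu, hv⟩ := Finset.mem_filter.1 he
      rw [image_lmap hv]; exact Or.inl heu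
    · obtain ⟨p, hp, rfl⟩ := Finset.mem_image.1 hS
      obtain ⟨hpd, hv⟩ := Finset.mem_filter.1 hp
      have hvp : v ∈ p.1 := hv ▸ (hval.2.1 p hpd).2
      rw [image_lmap hvp]; exact Or.inr ⟨p.2, hpd⟩
  · obtain ⟨p, hp, heq⟩ := Finset.mem_image.1 hS
    obtain ⟨hpd, hvp, hne⟩ := Finset.mem_filter.1 hp
    have h1 : lmap v p.1 = S := congrArg Prod.fst heq
    rw [← h1, image_lmap hvp]
    exact Or.inr ⟨p.2, hpd⟩

lemma link_directed {v : Fin (m + 2)} {S : Finset (Fin (m + 1))} {h' : Fin (m + 1)}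
    (h : (S, h') ∈ (link H v).directed) :
    (S.image v.succAbove ∪ {v}, v.succAbove h') ∈ H.directed := by
  obtain ⟨p, hp, heq⟩ := Finset.mem_image.1 h
  obtain ⟨hpd, hvp, hne⟩ := Finset.mem_filter.1 hp
  have h1 : lmap v p.1 = S := congrArg Prod.fst heq
  have h2 : gv v p.2 = h' := congrArg Prod.snd heq
  rw [← h1, ← h2, image_lmap hvp, succAbove_gv v hne]
  exact hpd

include hk

lemma link_free (hfree : ¬ H.ContainsT k) (v : Fin (m + 2)) :
    ¬ (link H v).ContainsT (k - 1) := by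
  rintro ⟨A, a, b, w, hA, ha, hb, hw, hab, haw, hbw, e1, e2, e3⟩
  apply hfree
  have hinj : Function.Injective v.succAbove := Fin.succAbove_right_injective
  have hmem : ∀ x, x ∉ A → v.succAbove x ∉ A.image v.succAbove ∪ {v} := by
    intro x hx
    simp only [Finset.mem_union, Finset.mem_image, Finset.mem_singleton, not_or]
    refine ⟨?_, Fin.succAbove_ne v x⟩
    rintro ⟨y, hy, hxy⟩
    exact hx (hinj hxy ▸ hy)
  have hset : ∀ x y : Fin (m + 1),
      (A.image v.succAbove ∪ {v}) ∪ {v.succAbove x, v.succAbove y}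
        = ((A ∪ {x, y}).image v.succAbove) ∪ {v} := by
    intro x y; ext z
    simp only [Finset.mem_union, Finset.mem_image, Finset.mem_insert, Finset.mem_singleton]
    constructor
    · rintro ((⟨j, hj, rfl⟩ | rfl) | (rfl | rfl))
      · exact Or.inl ⟨j, Or.inl hj, rfl⟩
      · exact Or.inr rfl
      · exact Or.inl ⟨x, Or.inr (Or.inl rfl), rfl⟩
      · exact Or.inl ⟨y, Or.inr (Or.inr rfl), rfl⟩
    · rintro (⟨j, (hj | rfl | rfl), rfl⟩ | rfl)
      · exact Or.inl (Or.inl ⟨j, hj, rfl⟩)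
      · exact Or.inr (Or.inl rfl)
      · exact Or.inr (Or.inr rfl)
      · exact Or.inl (Or.inr rfl)
  refine ⟨A.image v.succAbove ∪ {v}, v.succAbove a, v.succAbove b, v.succAbove w, ?_,
    hmem a ha, hmem b hb, hmem w hw,
    fun h => hab (hinj h), fun h => haw (hinj h), fun h => hbw (hinj h), ?_, ?_, ?_⟩
  · have hdisj : Disjoint (A.image v.succAbove) ({v} : Finset (Fin (m + 2))) := by
      simp only [Finset.disjoint_singleton_right, Finset.mem_image]
      rintro ⟨y, hy, hxy⟩
      exact Fin.succAbove_ne v y hxy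
    rw [Finset.card_union_of_disjoint hdisj, Finset.card_image_of_injective A hinj,
      Finset.card_singleton, hA]
    omega
  · rw [hset]; exact link_hasEdge H hval e1
  · rw [hset]; exact link_directed H hval e2
  · rw [hset]; exact link_hasEdge H hval e3

omit hk

lemma card_linkU (v : Fin (m + 2)) :
    (linkU H v).card = (H.undirected.filter (fun e => v ∈ e)).card
      + (H.directed.filter (fun p => p.2 = v)).card := by
  obtain ⟨h1, h2, h3, h4⟩ := hval
  rw [linkU, Finset.card_union_of_disjoint, Finset.card_image_of_injOn,
    Finset.card_image_of_injOn]
  · intro p hp q hq heq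
    obtain ⟨hpd, hpv⟩ := Finset.mem_filter.1 hp
    obtain ⟨hqd, hqv⟩ := Finset.mem_filter.1 hq
    have hvp : v ∈ p.1 := hpv ▸ (h2 p hpd).2
    have hvq : v ∈ q.1 := hqv ▸ (h2 q hqd).2
    exact h4 p hpd q hqd (lmap_inj hvp hvq heq)
  · intro e he e' he' heq
    obtain ⟨_, hv⟩ := Finset.mem_filter.1 he
    obtain ⟨_, hv'⟩ := Finset.mem_filter.1 he'
    exact lmap_inj hv hv' heq
  · rw [Finset.disjoint_left]
    rintro S hS hS'
    obtain ⟨e, he, rfl⟩ := Finset.mem_image.1 hS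
    obtain ⟨heu, hv⟩ := Finset.mem_filter.1 he
    obtain ⟨p, hp, heq⟩ := Finset.mem_image.1 hS'
    obtain ⟨hpd, hpv⟩ := Finset.mem_filter.1 hp
    have hvp : v ∈ p.1 := hpv ▸ (h2 p hpd).2
    exact h3 p hpd ((lmap_inj hvp hv heq) ▸ heu)

lemma card_linkD (v : Fin (m + 2)) :
    (linkD H v).card = (H.directed.filter (fun p => v ∈ p.1 ∧ p.2 ≠ v)).card := by
  obtain ⟨h1, h2, h3, h4⟩ := hval
  rw [linkD, Finset.card_image_of_injOn]
  intro p hp q hq heq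
  obtain ⟨hpd, hvp, _⟩ := Finset.mem_filter.1 hp
  obtain ⟨hqd, hvq, _⟩ := Finset.mem_filter.1 hq
  exact h4 p hpd q hqd (lmap_inj hvp hvq (congrArg Prod.fst heq))

lemma sum_linkU : ∑ v : Fin (m + 2), (linkU H v).card
    = k * H.undirected.card + H.directed.card := by
  have e1 : ∑ v : Fin (m + 2), (H.undirected.filter (fun e => v ∈ e)).card
      = k * H.undirected.card := by
    simp only [Finset.card_filter]
    rw [Finset.sum_comm]
    rw [Finset.sum_congr rfl (fun e he => ?_), Finset.sum_const, smul_eq_mul, mul_comm]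
    rw [← Finset.card_filter]
    rw [show Finset.univ.filter (fun v => v ∈ e) = e by ext x; simp]
    exact hval.1 e he
  have e2 : ∑ v : Fin (m + 2), (H.directed.filter (fun p => p.2 = v)).card
      = H.directed.card := by
    exact (Finset.card_eq_sum_card_fiberwise (fun p _ => Finset.mem_univ p.2)).symm
  calc ∑ v : Fin (m + 2), (linkU H v).card
      = ∑ v : Fin (m + 2), ((H.undirected.filter (fun e => v ∈ e)).card
        + (H.directed.filter (fun p => p.2 = v)).card) :=
        Finset.sum_congr rfl (fun v _ => card_linkU H hval v)
    _ = k * H.undirected.card + H.directed.card := by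
        rw [Finset.sum_add_distrib, e1, e2]

lemma sum_linkD : ∑ v : Fin (m + 2), (linkD H v).card = (k - 1) * H.directed.card := by
  calc ∑ v : Fin (m + 2), (linkD H v).card
      = ∑ v : Fin (m + 2), (H.directed.filter (fun p => v ∈ p.1 ∧ p.2 ≠ v)).card :=
        Finset.sum_congr rfl (fun v _ => card_linkD H hval v)
    _ = ∑ v : Fin (m + 2), ∑ p ∈ H.directed, if v ∈ p.1 ∧ p.2 ≠ v then 1 else 0 := by
        simp only [Finset.card_filter]
    _ = ∑ p ∈ H.directed, ∑ v : Fin (m + 2), if v ∈ p.1 ∧ p.2 ≠ v then 1 else 0 :=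
        Finset.sum_comm
    _ = (k - 1) * H.directed.card := by
        rw [Finset.sum_congr rfl (fun p hp => ?_), Finset.sum_const, smul_eq_mul, mul_comm]
        rw [← Finset.card_filter]
        have : Finset.univ.filter (fun v => v ∈ p.1 ∧ p.2 ≠ v) = p.1.erase p.2 := by
          ext x
          simp only [Finset.mem_filter, Finset.mem_univ, true_and, Finset.mem_erase]
          constructor
          · rintro ⟨h1, h2⟩; exact ⟨fun h => h2 h.symm, h1⟩
          · rintro ⟨h1, h2⟩; exact ⟨h2, fun h => h1 h.symm⟩
        rw [this, Finset.card_erase_of_mem (hval.2.1 p hp).2, (hval.2.1 p hp).1]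

end StmtAux

/-- Averaging over vertex links: if every `(n−1)`-vertex `T⃗_{k−1}`-free `(k−1)`-PDG `H'`
satisfies `α(H') + θ·β(H') ≤ π`, then every `n`-vertex `T⃗_k`-free `k`-PDG `H` satisfies
`α(H) + ((k−1)θ+1)/k · β(H) ≤ π`. (Densities are written out as counts over binomial
coefficients.) -/
theorem stmt_10 (k n : ℕ) (hk : 3 ≤ k) (hn : k ≤ n) (θ π : ℝ) (hθ : 0 < θ)
    (hind : ∀ H' : PDG (Fin (n - 1)), H'.IsValid (k - 1) → ¬ H'.ContainsT (k - 1) →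
      (H'.undirected.card : ℝ) + θ * (H'.directed.card : ℝ) ≤ π * ((n - 1).choose (k - 1)))
    (H : PDG (Fin n)) (hval : H.IsValid k) (hfree : ¬ H.ContainsT k) :
    (H.undirected.card : ℝ) + (((k : ℝ) - 1) * θ + 1) / (k : ℝ) * (H.directed.card : ℝ)
      ≤ π * (n.choose k) := by
  obtain ⟨m, rfl⟩ : ∃ m, n = m + 2 := ⟨n - 2, by omega⟩
  have hind' : ∀ H' : PDG (Fin (m + 1)), H'.IsValid (k - 1) → ¬ H'.ContainsT (k - 1) →
      (H'.undirected.card : ℝ) + θ * (H'.directed.card : ℝ)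
        ≤ π * ((m + 1).choose (k - 1)) := fun H' h1 h2 => hind H' h1 h2
  have key : ∀ v : Fin (m + 2),
      ((StmtAux.linkU H v).card : ℝ) + θ * ((StmtAux.linkD H v).card : ℝ)
        ≤ π * ((m + 1).choose (k - 1)) := fun v =>
    hind' (StmtAux.link H v) (StmtAux.link_valid H hval v)
      (StmtAux.link_free H hk hval hfree v)
  have hsum := Finset.sum_le_sum (fun v (_ : v ∈ Finset.univ) => key v)
  rw [Finset.sum_const, Finset.card_univ, Fintype.card_fin, nsmul_eq_mul] at hsum
  have hL1 : ∑ v : Fin (m + 2), ((StmtAux.linkU H v).card : ℝ)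
      = (k : ℝ) * H.undirected.card + H.directed.card := by
    rw [← Nat.cast_sum, StmtAux.sum_linkU H hval]
    push_cast; ring
  have hL2 : ∑ v : Fin (m + 2), ((StmtAux.linkD H v).card : ℝ)
      = ((k : ℝ) - 1) * H.directed.card := by
    rw [← Nat.cast_sum, StmtAux.sum_linkD H hval]
    rw [Nat.cast_mul, Nat.cast_sub (by omega : 1 ≤ k), Nat.cast_one]
  rw [Finset.sum_add_distrib, ← Finset.mul_sum, hL1, hL2] at hsum
  have hchoose : ((m + 2 : ℕ) : ℝ) * ((m + 1).choose (k - 1) : ℝ)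
      = (k : ℝ) * ((m + 2).choose k : ℝ) := by
    have h1 : (m + 2) * (m + 1).choose (k - 1) = (m + 2).choose ((k - 1) + 1) * ((k - 1) + 1) :=
      Nat.add_one_mul_choose_eq (m + 1) (k - 1)
    have h2 : (k - 1) + 1 = k := by omega
    rw [h2] at h1
    exact_mod_cast h1.trans (mul_comm _ _)
  have hkpos : (0 : ℝ) < (k : ℝ) := by
    have : (0 : ℕ) < k := by omega
    exact_mod_cast this
  have hmain : (k : ℝ) * ((H.undirected.card : ℝ)
      + (((k : ℝ) - 1) * θ + 1) / (k : ℝ) * (H.directed.card : ℝ))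
      ≤ (k : ℝ) * (π * ((m + 2).choose k : ℝ)) := by
    have hexp : (k : ℝ) * ((H.undirected.card : ℝ)
        + (((k : ℝ) - 1) * θ + 1) / (k : ℝ) * (H.directed.card : ℝ))
        = (k : ℝ) * H.undirected.card + H.directed.card
          + θ * (((k : ℝ) - 1) * H.directed.card) := by
      field_simp; ring
    rw [hexp]
    calc (k : ℝ) * H.undirected.card + H.directed.card
          + θ * (((k : ℝ) - 1) * H.directed.card)
        ≤ ((m + 2 : ℕ) : ℝ) * (π * ((m + 1).choose (k - 1) : ℝ)) := hsum
      _ = π * (((m + 2 : ℕ) : ℝ) * ((m + 1).choose (k - 1) : ℝ)) := by ring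
      _ = π * ((k : ℝ) * ((m + 2).choose k : ℝ)) := by rw [hchoose]
      _ = (k : ℝ) * (π * ((m + 2).choose k : ℝ)) := by ring
  exact le_of_mul_le_mul_left hmain hkpos
end

section
/- For every n divisible by k, there exists a T⃗_k-free partially directed k-graph on n vertices consisting only of directed edges, with exactly (n/k)·C((k−1)n/k, k−1) directed edges: partition the vertices into A of size n/k and B of size (k−1)n/k, and take all directed edges with k−1 vertices in B directed towards a vertex of A. -/
/-- For `k ∣ n` there is a `T⃗_k`-free `k`-PDG on `n` vertices consisting only of directed
edges, with exactly `(n/k)·C((k−1)n/k, k−1)` directed edges (all edges have `k−1` vertices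
in a part `B` of size `(k−1)n/k` and are directed towards a vertex of a part `A` of size
`n/k`). -/
theorem stmt_12 (k n : ℕ) (hk : 2 ≤ k) (hdiv : k ∣ n) :
    ∃ H : PDG (Fin n), H.IsValid k ∧ ¬ H.ContainsT k ∧ H.undirected = ∅ ∧
      H.directed.card = (n / k) * Nat.choose ((k - 1) * n / k) (k - 1) := by
  classical
  obtain ⟨m, rfl⟩ := hdiv
  have hk0 : 0 < k := by omega
  set N := k * m with hN
  set A : Finset (Fin N) := Finset.univ.filter (fun v => (v : ℕ) < m) with hA
  set B : Finset (Fin N) := Finset.univ.filter (fun v => ¬ (v : ℕ) < m) with hB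
  set D : Finset (Finset (Fin N) × Fin N) :=
    (A ×ˢ B.powersetCard (k-1)).image (fun p => (insert p.1 p.2, p.1)) with hD
  -- membership characterization
  have hmem : ∀ E : Finset (Fin N), ∀ v : Fin N, (E, v) ∈ D ↔
      ((v : ℕ) < m ∧ ∃ S, S ⊆ B ∧ S.card = k - 1 ∧ E = insert v S) := by
    intro E v
    simp only [hD, Finset.mem_image, Finset.mem_product, Finset.mem_powersetCard,
      Prod.ext_iff, Prod.exists, hA, Finset.mem_filter, Finset.mem_univ, true_and]
    constructor
    · rintro ⟨a, S, ⟨ha, hS, hSc⟩, hE, rfl⟩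
      exact ⟨ha, S, hS, hSc, hE.symm⟩
    · rintro ⟨hv, S, hS, hSc, rfl⟩
      exact ⟨v, S, ⟨hv, hS, hSc⟩, rfl, rfl⟩
  have hBsmall : ∀ S : Finset (Fin N), S ⊆ B → ∀ x ∈ S, ¬ (x : ℕ) < m := by
    intro S hS x hx
    have := hS hx
    rw [hB, Finset.mem_filter] at this
    exact this.2
  -- the head is the unique "small" vertex
  have hhead : ∀ E v, (E, v) ∈ D → ∀ x ∈ E, (x : ℕ) < m → x = v := by
    intro E v hEv x hx hxm
    obtain ⟨hv, S, hS, hSc, rfl⟩ := (hmem E v).1 hEv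
    rcases Finset.mem_insert.1 hx with h | h
    · exact h
    · exact absurd hxm (hBsmall S hS x h)
  have hheadmem : ∀ E v, (E, v) ∈ D → v ∈ E ∧ (v : ℕ) < m := by
    intro E v hEv
    obtain ⟨hv, S, hS, hSc, rfl⟩ := (hmem E v).1 hEv
    exact ⟨Finset.mem_insert_self v S, hv⟩
  have hcardE : ∀ E v, (E, v) ∈ D → E.card = k := by
    intro E v hEv
    obtain ⟨hv, S, hS, hSc, rfl⟩ := (hmem E v).1 hEv
    have hvS : v ∉ S := fun h => hBsmall S hS v h hv
    rw [Finset.card_insert_of_notMem hvS, hSc]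
    omega
  refine ⟨⟨∅, D⟩, ⟨?_, ?_, ?_, ?_⟩, ?_, rfl, ?_⟩
  · simp
  · intro p hp
    exact ⟨hcardE p.1 p.2 hp, (hheadmem p.1 p.2 hp).1⟩
  · simp
  · intro p hp q hq hpq
    have h1 := hheadmem p.1 p.2 hp
    have h2 := hheadmem q.1 q.2 hq
    have : q.2 = p.2 := hhead p.1 p.2 hp q.2 (hpq ▸ h2.1) h2.2
    exact Prod.ext hpq this.symm
  · rintro ⟨A', a, b, w, hcard, ha, hb, hw, hab, haw, hbw, h1, h2, h3⟩
    simp only [PDG.HasEdge, Finset.notMem_empty, false_or] at h1 h3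
    -- from h2: w small, everything else in A'∪{a,w} not small
    have hwsmall := (hheadmem _ _ h2).2
    have hnotsmall : ∀ x ∈ A' ∪ ({a, w} : Finset (Fin N)), x ≠ w → ¬ (x : ℕ) < m := by
      intro x hx hxw hxm
      exact hxw (hhead _ _ h2 x hx hxm)
    have hasmall : ¬ (a : ℕ) < m :=
      hnotsmall a (by simp) haw
    have hA'small : ∀ x ∈ A', ¬ (x : ℕ) < m := by
      intro x hx
      exact hnotsmall x (Finset.mem_union_left _ hx) (fun h => hw (h ▸ hx))
    -- from h1: b small
    obtain ⟨v, hv⟩ := h1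
    have hvmem := hheadmem _ _ hv
    have hbsmall : (b : ℕ) < m := by
      have hvm := hvmem.1
      rcases Finset.mem_union.1 hvm with h | h
      · exact absurd hvmem.2 (hA'small v h)
      · rcases Finset.mem_insert.1 h with h | h
        · exact absurd hvmem.2 (h ▸ hasmall)
        · simp at h; exact h ▸ hvmem.2
    -- from h3: b = w
    obtain ⟨u, hu⟩ := h3
    have hbu : b = u := hhead _ _ hu b (by simp) hbsmall
    have hwu : w = u := hhead _ _ hu w (by simp) hwsmall
    exact hbw (hbu.trans hwu.symm)
  · -- cardinality
    have hinj : Set.InjOn (fun p : Fin N × Finset (Fin N) => (insert p.1 p.2, p.1))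
        ((A ×ˢ B.powersetCard (k-1)) : Finset _) := by
      rintro ⟨a, S⟩ h1 ⟨a', S'⟩ h2 heq
      simp only [Finset.coe_product, Set.mem_prod, Finset.mem_coe, Finset.mem_powersetCard,
        hA, Finset.mem_filter] at h1 h2
      simp only [Prod.ext_iff] at heq
      obtain ⟨hE, rfl⟩ := heq
      have haS : a ∉ S := fun h => hBsmall S h1.2.1 a h h1.1.2
      have haS' : a ∉ S' := fun h => hBsmall S' h2.2.1 a h h1.1.2
      have : S = S' := by
        have := congrArg (fun t => Finset.erase t a) hE
        simpa [Finset.erase_insert haS, Finset.erase_insert haS'] using this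
      simp [this]
    rw [hD, Finset.card_image_of_injOn hinj, Finset.card_product, Finset.card_powersetCard]
    have hAcard : A.card = m := by
      have hmN : m ≤ N := Nat.le_mul_of_pos_left m hk0
      rw [hA]
      rw [show (Finset.univ.filter (fun v : Fin N => (v : ℕ) < m)) =
          (Finset.range m).attachFin (fun x hx => lt_of_lt_of_le (Finset.mem_range.1 hx) hmN) by
        ext x; simp [Finset.mem_attachFin]]
      rw [Finset.card_attachFin, Finset.card_range]
    have hBcard : B.card = (k - 1) * m := by
      have : B = Finset.univ \ A := by
        rw [hA, hB]; ext x; simp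
      rw [this, Finset.card_sdiff_of_subset (Finset.subset_univ A), hAcard]
      simp only [Finset.card_univ, Fintype.card_fin]
      cases k with
      | zero => omega
      | succ k' => simp only [hN, Nat.succ_mul, Nat.add_sub_cancel, Nat.succ_sub_one]
    have e1 : N / k = m := by rw [hN, Nat.mul_div_cancel_left m hk0]
    have e2 : (k - 1) * N / k = (k - 1) * m := by
      rw [hN, show (k-1) * (k * m) = k * ((k-1) * m) by ring, Nat.mul_div_cancel_left _ hk0]
    rw [hAcard, hBcard, e1, e2]
end

section
/- If a 2-PDG H⃗ on n vertices with α·C(n,2) undirected edges and β·C(n,2) directed edges contains no copy of T⃗₂ as a subgraph, then α + 2β ≤ 1 + O(1/n). -/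
section helpers
variable {V : Type} [DecidableEq V]

theorem pdg_pair_other {e : Finset V} (h2 : e.card = 2) {w : V} (hw : w ∈ e) :
    ∃ x, x ≠ w ∧ e = {x, w} := by
  obtain ⟨a, b, hab, habe⟩ := Finset.card_eq_two.mp h2
  rcases Finset.mem_insert.mp (habe ▸ hw) with h | h
  · exact ⟨b, (h ▸ hab).symm, by rw [habe, h, Finset.pair_comm]⟩
  · have h' : w = b := Finset.mem_singleton.mp h
    exact ⟨a, h' ▸ hab, by rw [habe, h']⟩
end helpers

variable {V : Type} [DecidableEq V]

def pdgDeg (E : Finset (Finset V)) (v : V) : ℕ := (E.filter (fun e => v ∈ e)).card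

def pdgCN (S : Finset V) (E : Finset (Finset V)) (p : Finset V) : Prop :=
  ∃ x ∈ S, x ∉ p ∧ ∀ y ∈ p, ({x, y} : Finset V) ∈ E

instance (S : Finset V) (E : Finset (Finset V)) (p : Finset V) : Decidable (pdgCN S E p) := by
  unfold pdgCN; infer_instance

def pdgF (S : Finset V) (E : Finset (Finset V)) : Finset (Finset V) :=
  E.filter (fun e => ¬ pdgCN S E e)

def pdgP2 (S : Finset V) (E : Finset (Finset V)) : Finset (Finset V) :=
  (Finset.powersetCard 2 S).filter (fun p => p ∉ E ∧ pdgCN S E p)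

theorem pdg_core (n : ℕ) : ∀ (S : Finset V) (E : Finset (Finset V)), S.card = n →
    (∀ e ∈ E, e ⊆ S ∧ e.card = 2) →
    (pdgF S E).card ≤ (pdgP2 S E).card + S.card := by
  induction n using Nat.strong_induction_on with
  | _ n ih =>
  intro S E hcard hE
  rcases S.eq_empty_or_nonempty with hS | hS
  · subst hS
    have : pdgF ∅ E ⊆ E := Finset.filter_subset _ _
    have hEe : E = ∅ := by
      rw [Finset.eq_empty_iff_forall_notMem]
      intro e he
      have := hE e he
      have h1 : e = ∅ := Finset.subset_empty.mp this.1
      rw [h1] at this; simp at this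
    simp [pdgF, hEe]
  · obtain ⟨v, hvS, hvmin⟩ := S.exists_min_image (pdgDeg E) hS
    set S' := S.erase v with hS'def
    set E' := E.filter (fun e => v ∉ e) with hE'def
    have hE'h : ∀ e ∈ E', e ⊆ S' ∧ e.card = 2 := by
      intro e he
      rw [hE'def, Finset.mem_filter] at he
      refine ⟨?_, (hE e he.1).2⟩
      intro x hx
      exact Finset.mem_erase.mpr ⟨fun h => he.2 (h ▸ hx), (hE e he.1).1 hx⟩
    have hn1 : S'.card = n - 1 := by rw [hS'def, Finset.card_erase_of_mem hvS, hcard]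
    have hnpos : 1 ≤ n := by rw [← hcard]; exact Finset.card_pos.mpr hS
    have IH := ih (n - 1) (by omega) S' E' hn1 hE'h
    -- (a)
    have ha : ((pdgF S E).filter (fun e => ¬ v ∈ e)).card ≤ (pdgF S' E').card := by
      apply Finset.card_le_card
      intro e he
      rw [Finset.mem_filter] at he
      obtain ⟨heF, hve⟩ := he
      rw [pdgF, Finset.mem_filter] at heF ⊢
      refine ⟨Finset.mem_filter.mpr ⟨heF.1, hve⟩, ?_⟩
      intro ⟨x, hxS', hxp, hxy⟩
      exact heF.2 ⟨x, S.erase_subset v hxS', hxp, fun y hy =>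
        Finset.filter_subset _ _ (hxy y hy)⟩
    -- (b)
    have hb : pdgP2 S' E' ⊆ (pdgP2 S E).filter (fun p => ¬ v ∈ p) := by
      intro p hp
      rw [pdgP2, Finset.mem_filter, Finset.mem_powersetCard] at hp
      obtain ⟨⟨hpS', hp2⟩, hpE', hcn⟩ := hp
      have hvp : v ∉ p := fun h => (Finset.mem_erase.mp (hpS' h)).1 rfl
      rw [Finset.mem_filter, pdgP2, Finset.mem_filter, Finset.mem_powersetCard]
      refine ⟨⟨⟨hpS'.trans (S.erase_subset v), hp2⟩, ?_, ?_⟩, hvp⟩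
      · intro hpE
        exact hpE' (Finset.mem_filter.mpr ⟨hpE, hvp⟩)
      · obtain ⟨x, hxS', hxp, hxy⟩ := hcn
        exact ⟨x, S.erase_subset v hxS', hxp, fun y hy => Finset.filter_subset _ _ (hxy y hy)⟩
    -- (c)
    have hsplitF := Finset.card_filter_add_card_filter_not
      (s := pdgF S E) (p := fun e => v ∈ e)
    have hsplitP := Finset.card_filter_add_card_filter_not
      (s := pdgP2 S E) (p := fun p => v ∈ p)
    have hbcard : (pdgP2 S' E').card ≤ ((pdgP2 S E).filter (fun p => ¬ v ∈ p)).card :=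
      Finset.card_le_card hb
    have hc : ((pdgF S E).filter (fun e => v ∈ e)).card ≤
        ((pdgP2 S E).filter (fun p => v ∈ p)).card + 1 := by
      rcases Nat.eq_zero_or_pos ((pdgF S E).filter (fun e => v ∈ e)).card with h0 | hpos
      · omega
      · obtain ⟨e, he⟩ := Finset.card_pos.mp hpos
        rw [Finset.mem_filter] at he
        obtain ⟨heF, hve⟩ := he
        have heE : e ∈ E := Finset.filter_subset _ _ heF
        have hecard := (hE e heE).2
        have heS := (hE e heE).1
        have hnoCN : ¬ pdgCN S E e := (Finset.mem_filter.mp heF).2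
        obtain ⟨a, b, hab, habe⟩ := Finset.card_eq_two.mp hecard
        -- find w with e = {v, w}, v ≠ w
        obtain ⟨w, hvw, hew⟩ : ∃ w, v ≠ w ∧ e = {v, w} := by
          rcases Finset.mem_insert.mp (habe ▸ hve) with h | h
          · exact ⟨b, h ▸ hab, by rw [habe, h]⟩
          · have h' : v = b := Finset.mem_singleton.mp h
            exact ⟨a, h' ▸ hab.symm, by rw [habe, h', Finset.pair_comm]⟩
        have hwS : w ∈ S := heS (by rw [hew]; simp)
        have hweE : ({v, w} : Finset V) ∈ E := hew ▸ heE
        set NW := S.filter (fun x => x ≠ v ∧ x ≠ w ∧ ({x, w} : Finset V) ∈ E) with hNW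
        -- deg E w ≤ NW.card + 1
        have hdegw : pdgDeg E w ≤ NW.card + 1 := by
          have hsub : E.filter (fun e' => w ∈ e') ⊆
              Finset.image (fun x => ({x, w} : Finset V)) (insert v NW) := by
            intro e' he'
            rw [Finset.mem_filter] at he'
            obtain ⟨he'E, hwe'⟩ := he'
            obtain ⟨c, d, hcd, he'cd⟩ := Finset.card_eq_two.mp (hE e' he'E).2
            obtain ⟨x, hxw, he'x⟩ : ∃ x, x ≠ w ∧ e' = {x, w} := by
              rcases Finset.mem_insert.mp (he'cd ▸ hwe') with h | h
              · exact ⟨d, (h ▸ hcd).symm, by rw [he'cd, h, Finset.pair_comm]⟩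
              · have h' : w = d := Finset.mem_singleton.mp h
                exact ⟨c, h' ▸ hcd, by rw [he'cd, h']⟩
            rw [Finset.mem_image]
            refine ⟨x, ?_, he'x.symm⟩
            by_cases hxv : x = v
            · exact Finset.mem_insert.mpr (Or.inl hxv)
            · refine Finset.mem_insert.mpr (Or.inr ?_)
              rw [hNW, Finset.mem_filter]
              exact ⟨(hE e' he'E).1 (he'x ▸ Finset.mem_insert_self x {w}),
                hxv, hxw, he'x ▸ he'E⟩
          calc pdgDeg E w ≤ (Finset.image (fun x => ({x, w} : Finset V)) (insert v NW)).card :=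
                Finset.card_le_card hsub
            _ ≤ (insert v NW).card := Finset.card_image_le
            _ ≤ NW.card + 1 := Finset.card_insert_le _ _
        -- NW.card ≤ degP2v
        have hNWP2 : NW.card ≤ ((pdgP2 S E).filter (fun p => v ∈ p)).card := by
          apply Finset.card_le_card_of_injOn (fun x => ({v, x} : Finset V))
          · intro x hx
            rw [hNW, Finset.mem_coe, Finset.mem_filter] at hx
            obtain ⟨hxS, hxv, hxw, hxwE⟩ := hx
            rw [Finset.mem_coe, Finset.mem_filter]
            refine ⟨?_, by simp⟩
            rw [pdgP2, Finset.mem_filter, Finset.mem_powersetCard]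
            refine ⟨⟨?_, Finset.card_pair (Ne.symm hxv)⟩, ?_, ?_⟩
            · intro y hy
              rcases Finset.mem_insert.mp hy with h | h
              · exact h ▸ hvS
              · exact (Finset.mem_singleton.mp h) ▸ hxS
            · intro hvxE
              apply hnoCN
              refine ⟨x, hxS, ?_, ?_⟩
              · rw [hew]; simp [hxv, hxw]
              · intro y hy
                rw [hew] at hy
                rcases Finset.mem_insert.mp hy with h | h
                · rw [h, Finset.pair_comm]; exact hvxE
                · rw [Finset.mem_singleton.mp h]; exact hxwE
            · refine ⟨w, hwS, ?_, ?_⟩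
              · simp only [Finset.mem_insert, Finset.mem_singleton]
                push_neg
                exact ⟨Ne.symm hvw, Ne.symm hxw⟩
              · intro y hy
                rcases Finset.mem_insert.mp hy with h | h
                · rw [h, Finset.pair_comm]; exact hweE
                · rw [Finset.mem_singleton.mp h, Finset.pair_comm]; exact hxwE
          · intro x hx y hy hxy
            have hx' := Finset.mem_filter.mp (Finset.mem_coe.mp hx)
            have hxy' : ({v, x} : Finset V) = {v, y} := hxy
            have : x ∈ ({v, y} : Finset V) := hxy' ▸ (by simp : x ∈ ({v, x} : Finset V))
            rcases Finset.mem_insert.mp this with h | h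
            · exact absurd h hx'.2.1
            · exact Finset.mem_singleton.mp h
        have hdegv : ((pdgF S E).filter (fun e => v ∈ e)).card ≤ pdgDeg E v :=
          Finset.card_le_card (fun e' he' => by
            rw [Finset.mem_filter] at he' ⊢
            exact ⟨Finset.filter_subset _ _ he'.1, he'.2⟩)
        have hminw := hvmin w hwS
        omega
    have hScard : S'.card + 1 = S.card := by
      rw [hS'def, Finset.card_erase_of_mem hvS]
      omega
    omega

/-- If a 2-PDG on `n` vertices with `α·C(n,2)` undirected and `β·C(n,2)` directed edges is
`T⃗₂`-free, then `α + 2β ≤ 1 + O(1/n)`. -/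
theorem stmt_14 :
    ∃ C : ℝ, 0 ≤ C ∧ ∀ (n : ℕ) (V : Type) [Fintype V] [DecidableEq V],
      Fintype.card V = n → ∀ H : PDG V, H.IsValid 2 → ¬ H.ContainsT 2 →
        (H.undirected.card : ℝ) + 2 * (H.directed.card : ℝ)
          ≤ (1 + C / (n : ℝ)) * (n.choose 2) := by
  refine ⟨4, by norm_num, ?_⟩
  intro n V _ _ hVn H hvalid hfree
  obtain ⟨hU, hD, hDU, hDinj⟩ := hvalid
  set D2 := H.directed.image Prod.fst with hD2
  have hD2card : D2.card = H.directed.card :=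
    Finset.card_image_of_injOn (fun p hp q hq h => hDinj p hp q hq h)
  set E := H.undirected ∪ D2 with hEdef
  have hdisj : Disjoint H.undirected D2 := by
    rw [Finset.disjoint_right]
    intro e he
    obtain ⟨p, hp, rfl⟩ := Finset.mem_image.mp he
    exact hDU p hp
  have hEcard : E.card = H.undirected.card + H.directed.card := by
    rw [hEdef, Finset.card_union_of_disjoint hdisj, hD2card]
  have hE2 : ∀ e ∈ E, e ⊆ (Finset.univ : Finset V) ∧ e.card = 2 := by
    intro e he
    refine ⟨Finset.subset_univ _, ?_⟩
    rcases Finset.mem_union.mp he with h | h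
    · exact hU e h
    · obtain ⟨p, hp, rfl⟩ := Finset.mem_image.mp h
      exact (hD p hp).1
  have hHasEdge : ∀ e ∈ E, H.HasEdge e := by
    intro e he
    rcases Finset.mem_union.mp he with h | h
    · exact Or.inl h
    · obtain ⟨p, hp, rfl⟩ := Finset.mem_image.mp h
      exact Or.inr ⟨p.2, hp⟩
  -- directed edges are in pdgF
  have hD2F : D2 ⊆ pdgF Finset.univ E := by
    intro e he
    rw [pdgF, Finset.mem_filter]
    refine ⟨Finset.mem_union_right _ he, ?_⟩
    rintro ⟨x, -, hxe, hxy⟩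
    obtain ⟨p, hp, rfl⟩ := Finset.mem_image.mp he
    have hwp : p.2 ∈ p.1 := (hD p hp).2
    obtain ⟨a, haw, hew⟩ := pdg_pair_other (hD p hp).1 hwp
    apply hfree
    refine ⟨∅, a, x, p.2, by simp, by simp, by simp, by simp, ?_, haw, ?_, ?_, ?_, ?_⟩
    · intro h
      exact hxe (h ▸ (hew ▸ Finset.mem_insert_self a {p.2}))
    · intro h
      exact hxe (h ▸ (hew ▸ hwp))
    · rw [Finset.empty_union]
      have hxa : ({x, a} : Finset V) ∈ E := hxy a (hew ▸ Finset.mem_insert_self a {p.2})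
      rw [Finset.pair_comm a x]
      exact hHasEdge _ hxa
    · rw [Finset.empty_union, ← hew]
      exact hp
    · rw [Finset.empty_union]
      have hxw : ({x, p.2} : Finset V) ∈ E := hxy p.2 (hew ▸ hwp)
      exact hHasEdge _ hxw
  have hcore := pdg_core (Fintype.card V) Finset.univ E (by simp) hE2
  have hdF : H.directed.card ≤ (pdgF Finset.univ E).card := by
    rw [← hD2card]; exact Finset.card_le_card hD2F
  -- P2 and E disjoint inside powersetCard 2 univ
  have hP2E : (pdgP2 Finset.univ E).card + E.card ≤ n.choose 2 := by
    have hdisj2 : Disjoint (pdgP2 Finset.univ E) E := by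
      rw [Finset.disjoint_left]
      intro p hp
      exact ((Finset.mem_filter.mp hp).2).1
    have hsub : pdgP2 Finset.univ E ∪ E ⊆ Finset.powersetCard 2 Finset.univ := by
      intro p hp
      rcases Finset.mem_union.mp hp with h | h
      · exact (Finset.mem_filter.mp h).1
      · exact Finset.mem_powersetCard.mpr ⟨Finset.subset_univ _, (hE2 p h).2⟩
    have := Finset.card_le_card hsub
    rw [Finset.card_union_of_disjoint hdisj2, Finset.card_powersetCard,
      Finset.card_univ, hVn] at this
    exact this
  have hEchoose : E.card ≤ n.choose 2 := by omega
  have hmain : H.undirected.card + 2 * H.directed.card ≤ n.choose 2 + n := by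
    have : H.undirected.card + 2 * H.directed.card = E.card + H.directed.card := by omega
    rw [Finset.card_univ, hVn] at hcore
    omega
  -- now the real inequality
  rcases Nat.lt_or_ge n 2 with hn2 | hn2
  · have hch : n.choose 2 = 0 := by interval_cases n <;> simp
    rw [hch] at hEchoose
    have hu0 : H.undirected.card = 0 := by omega
    have hd0 : H.directed.card = 0 := by omega
    rw [hu0, hd0, hch]
    norm_num
  · have hn0 : (0:ℝ) < n := by
      have : (0:ℕ) < n := by omega
      exact_mod_cast this
    have hnR : (2:ℝ) ≤ n := by exact_mod_cast hn2
    have hcast : (H.undirected.card : ℝ) + 2 * (H.directed.card : ℝ) ≤ (n.choose 2 : ℝ) + n := by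
      exact_mod_cast hmain
    have hch : ((n.choose 2 : ℕ) : ℝ) = n * (n - 1) / 2 := Nat.cast_choose_two ℝ n
    have hkey : 4 / (n:ℝ) * ((n:ℝ) * ((n:ℝ) - 1) / 2) = 2 * ((n:ℝ) - 1) := by
      field_simp
      ring
    have : (1 + 4 / (n:ℝ)) * (n.choose 2 : ℝ) = (n.choose 2 : ℝ) + 2 * ((n:ℝ) - 1) := by
      rw [hch, ← hkey]
      ring
    rw [this]
    have : (n:ℝ) ≤ 2 * ((n:ℝ) - 1) := by linarith
    linarith
end

section
/- Every family S of (ℓ−1)-element subsets of a finite vertex set covers at most ((ℓ−1)!·|S|)^(ℓ/(ℓ−1))/ℓ! many ℓ-element sets, where an ℓ-set is covered if all of its (ℓ−1)-element subsets lie in S. -/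
open Finset NNReal

lemma genHolder {X ι : Type*} [DecidableEq ι] (X' : Finset X) (F : Finset ι)
    (g : ι → X → ℝ≥0) (w : ι → ℝ) (hw : ∀ i ∈ F, 0 ≤ w i) (hsum : ∑ i ∈ F, w i = 1) :
    ∑ x ∈ X', ∏ i ∈ F, g i x ^ w i ≤ ∏ i ∈ F, (∑ x ∈ X', g i x) ^ w i := by
  induction F using Finset.induction_on generalizing w with
  | empty => simp at hsum
  | @insert a t ha ih =>

    rw [Finset.sum_insert ha] at hsum
    have hwa : 0 ≤ w a := hw a (mem_insert_self _ _)
    have hwt : ∀ i ∈ t, 0 ≤ w i := fun i hi => hw i (mem_insert_of_mem hi)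
    rcases eq_or_lt_of_le (Finset.sum_nonneg hwt) with hc0 | hc
    · -- all weights in t are zero, w a = 1
      have hz : ∀ i ∈ t, w i = 0 := (Finset.sum_eq_zero_iff_of_nonneg hwt).1 hc0.symm
      have hwa1 : w a = 1 := by rw [← hc0] at hsum; linarith
      have h1 : ∀ x, ∏ i ∈ t, g i x ^ w i = 1 := fun x =>
        Finset.prod_eq_one (fun i hi => by rw [hz i hi, NNReal.rpow_zero])
      have h2 : ∏ i ∈ t, (∑ x ∈ X', g i x) ^ w i = 1 :=
        Finset.prod_eq_one (fun i hi => by rw [hz i hi, NNReal.rpow_zero])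
      simp only [Finset.prod_insert ha, h1, h2, hwa1, NNReal.rpow_one, mul_one]
      exact le_rfl
    · set c := ∑ i ∈ t, w i with hcdef
      have hwac : w a + c = 1 := hsum
      rcases eq_or_lt_of_le hwa with hwa0 | hwa0
      · -- w a = 0
        have hc1 : c = 1 := by linarith
        simp only [Finset.prod_insert ha, ← hwa0, NNReal.rpow_zero, one_mul]
        exact ih w hwt hc1
      · -- 0 < w a < 1
        have hwalt : w a < 1 := by linarith
        have hpq : (1 / w a).HolderConjugate (1 / c) := by
          refine Real.holderConjugate_iff.2 ⟨?_, ?_⟩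
          · rw [lt_div_iff₀ hwa0]; linarith
          · rw [one_div, one_div, inv_inv, inv_inv]; linarith
        have hwane : w a ≠ 0 := ne_of_gt hwa0
        have hcne : c ≠ 0 := ne_of_gt hc
        have holder := NNReal.inner_le_Lp_mul_Lq X' (fun x => g a x ^ w a)
          (fun x => ∏ i ∈ t, g i x ^ w i) hpq
        have e1 : ∀ x : X, (g a x ^ w a) ^ (1 / w a) = g a x := fun x => by
          rw [← NNReal.rpow_mul, mul_one_div_cancel hwane, NNReal.rpow_one]
        have e2 : ∀ x, (∏ i ∈ t, g i x ^ w i) ^ (1 / c)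
            = ∏ i ∈ t, g i x ^ (w i * (1 / c)) := fun x => by
          rw [← NNReal.finset_prod_rpow]
          exact Finset.prod_congr rfl fun i _ => by rw [← NNReal.rpow_mul]
        have ihc := ih (fun i => w i * (1 / c)) (fun i hi => mul_nonneg (hwt i hi) (by positivity))
          (by rw [← Finset.sum_mul, ← hcdef, mul_one_div_cancel hcne])
        have key : (∑ x ∈ X', (∏ i ∈ t, g i x ^ w i) ^ (1 / c)) ^ c
            ≤ ∏ i ∈ t, (∑ x ∈ X', g i x) ^ w i := by
          calc (∑ x ∈ X', (∏ i ∈ t, g i x ^ w i) ^ (1 / c)) ^ c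
              = (∑ x ∈ X', ∏ i ∈ t, g i x ^ (w i * (1 / c))) ^ c := by
                congr 1; exact Finset.sum_congr rfl fun x _ => e2 x
            _ ≤ (∏ i ∈ t, (∑ x ∈ X', g i x) ^ (w i * (1 / c))) ^ c :=
                NNReal.rpow_le_rpow ihc (le_of_lt hc)
            _ = ∏ i ∈ t, (∑ x ∈ X', g i x) ^ w i := by
                rw [← NNReal.finset_prod_rpow]
                exact Finset.prod_congr rfl fun i _ => by
                  rw [← NNReal.rpow_mul, mul_one_div, div_mul_cancel₀ _ hcne]
        calc ∑ x ∈ X', ∏ i ∈ insert a t, g i x ^ w i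
            = ∑ x ∈ X', (g a x ^ w a) * ∏ i ∈ t, g i x ^ w i := by
              exact Finset.sum_congr rfl fun x _ => by rw [Finset.prod_insert ha]
          _ ≤ (∑ x ∈ X', (g a x ^ w a) ^ (1 / w a)) ^ (1 / (1 / w a))
              * (∑ x ∈ X', (∏ i ∈ t, g i x ^ w i) ^ (1 / c)) ^ (1 / (1 / c)) := holder
          _ = (∑ x ∈ X', g a x) ^ w a
              * (∑ x ∈ X', (∏ i ∈ t, g i x ^ w i) ^ (1 / c)) ^ c := by
              rw [one_div_one_div, one_div_one_div]
              congr 2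
              exact Finset.sum_congr rfl fun x _ => e1 x
          _ ≤ (∑ x ∈ X', g a x) ^ w a * ∏ i ∈ t, (∑ x ∈ X', g i x) ^ w i :=
              mul_le_mul_right key _
          _ = ∏ i ∈ insert a t, (∑ x ∈ X', g i x) ^ w i := by rw [Finset.prod_insert ha]

lemma LW {I V : Type*} [Fintype I] [DecidableEq I] [DecidableEq V] (v₀ : V) (s : Finset I) :
    ∀ (A : Finset (I → V)), A.Nonempty →
      A.card ^ s.card ≤ A.card * ∏ i ∈ s, (A.image (fun f => Function.update f i v₀)).card := by
  induction s using Finset.induction_on with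
  | empty => intro A hA; simpa using Finset.card_pos.2 hA
  | @insert a F ha ih =>
    intro A hA
    rcases Finset.eq_empty_or_nonempty F with rfl | hF
    · -- |s| = 1
      simp only [Finset.prod_insert (Finset.notMem_empty a), Finset.prod_empty, mul_one,
        Finset.card_insert_of_notMem (Finset.notMem_empty a), Finset.card_empty, pow_one]
      have : 0 < (A.image (fun f => Function.update f a v₀)).card :=
        Finset.card_pos.2 (hA.image _)
      simpa using Nat.le_mul_of_pos_right A.card this
    · set n := F.card with hn
      have hn1 : 1 ≤ n := Finset.card_pos.2 hF
      have hnR : (n : ℝ) ≠ 0 := by positivity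
      set X : Finset V := A.image (fun f => f a) with hX
      set Ax : V → Finset (I → V) := fun x => A.filter (fun f => f a = x) with hAx
      set Bx : V → Finset (I → V) := fun x => (Ax x).image (fun f => Function.update f a v₀)
        with hBx
      set g : I → V → ℕ := fun i x => ((Bx x).image (fun f => Function.update f i v₀)).card
        with hg
      set P : ℕ := (A.image (fun f => Function.update f a v₀)).card with hP
      set Q : I → ℕ := fun i => (A.image (fun f => Function.update f i v₀)).card with hQ
      -- a ∉ F so for i ∈ F, a ≠ i
      have hai : ∀ i ∈ F, a ≠ i := fun i hi h => ha (h ▸ hi)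
      have f1 : A.card = ∑ x ∈ X, (Ax x).card :=
        Finset.card_eq_sum_card_fiberwise (fun f hf => Finset.mem_image_of_mem _ hf)
      have f2 : ∀ x ∈ X, (Bx x).card = (Ax x).card := by
        intro x hx
        apply Finset.card_image_of_injOn
        intro f hf g' hg' hfg
        have hfa : f a = x := (Finset.mem_filter.1 hf).2
        have hga : g' a = x := (Finset.mem_filter.1 hg').2
        funext j
        by_cases hj : j = a
        · subst hj; rw [hfa, hga]
        · have h2 := congrFun hfg j
          simpa only [Function.update_of_ne hj] using h2
      have f3 : ∀ x ∈ X, (Bx x).card ≤ P := by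
        intro x hx
        exact Finset.card_le_card (Finset.image_subset_image (Finset.filter_subset _ _))
      have f4 : ∀ x ∈ X, (Bx x).card ^ n ≤ (Bx x).card * ∏ i ∈ F, g i x := by
        intro x hx
        have hne : (Bx x).Nonempty := by
          obtain ⟨f, hf, hfa⟩ := Finset.mem_image.1 hx
          exact ⟨_, Finset.mem_image_of_mem _ (Finset.mem_filter.2 ⟨hf, hfa⟩)⟩
        exact ih (Bx x) hne
      have f5 : ∀ i ∈ F, ∑ x ∈ X, g i x ≤ Q i := by
        intro i hi
        have step1 : ∀ x, g i x ≤ ((Ax x).image (fun f => Function.update f i v₀)).card := by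
          intro x
          have e : (Bx x).image (fun f => Function.update f i v₀)
              = ((Ax x).image (fun f => Function.update f i v₀)).image
                  (fun f => Function.update f a v₀) := by
            rw [hBx, Finset.image_image, Finset.image_image]
            apply Finset.image_congr
            intro f _
            exact (Function.update_comm (hai i hi) v₀ v₀ f)
          simp only [hg]
          rw [e]
          exact Finset.card_image_le
        have step2 : ∀ x ∈ X, ((Ax x).image (fun f => Function.update f i v₀)).card
            ≤ ((A.image (fun f => Function.update f i v₀)).filter (fun h => h a = x)).card := by
          intro x hx
          apply Finset.card_le_card
          intro h hh
          obtain ⟨f, hf, rfl⟩ := Finset.mem_image.1 hh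
          have hf' := Finset.mem_filter.1 hf
          refine Finset.mem_filter.2 ⟨Finset.mem_image_of_mem _ hf'.1, ?_⟩
          rw [Function.update_of_ne (hai i hi)]
          exact hf'.2
        have step3 : ∑ x ∈ X, ((A.image (fun f => Function.update f i v₀)).filter
            (fun h => h a = x)).card = Q i := by
          rw [hQ]
          refine (Finset.card_eq_sum_card_fiberwise ?_).symm
          intro h hh
          obtain ⟨f, hf, rfl⟩ := Finset.mem_image.1 hh
          simp only [Function.update_of_ne (hai i hi)]
          exact Finset.mem_image_of_mem _ hf
        calc ∑ x ∈ X, g i x ≤ ∑ x ∈ X, ((Ax x).image (fun f => Function.update f i v₀)).card :=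
              Finset.sum_le_sum (fun x _ => step1 x)
          _ ≤ ∑ x ∈ X, ((A.image (fun f => Function.update f i v₀)).filter
              (fun h => h a = x)).card := Finset.sum_le_sum step2
          _ = Q i := step3
      -- now the NNReal computation
      have key : ∀ x ∈ X, ((Ax x).card : ℝ≥0)
          ≤ ((P : ℝ≥0) * ∏ i ∈ F, (g i x : ℝ≥0)) ^ ((1 : ℝ)/n) := by
        intro x hx
        have h1 : ((Ax x).card : ℝ≥0) ^ (n : ℕ) ≤ (P : ℝ≥0) * ∏ i ∈ F, (g i x : ℝ≥0) := by
          calc ((Ax x).card : ℝ≥0) ^ (n : ℕ) = ((Bx x).card : ℝ≥0) ^ (n:ℕ) := by rw [f2 x hx]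
            _ ≤ ((Bx x).card : ℝ≥0) * ∏ i ∈ F, (g i x : ℝ≥0) := by
                exact_mod_cast Nat.cast_le.2 (f4 x hx)
            _ ≤ (P : ℝ≥0) * ∏ i ∈ F, (g i x : ℝ≥0) :=
                mul_le_mul_left (Nat.cast_le.2 (f3 x hx)) _
        calc ((Ax x).card : ℝ≥0) = ((((Ax x).card : ℝ≥0) ^ (n:ℕ)) : ℝ≥0) ^ ((1:ℝ)/n) := by
              rw [← NNReal.rpow_natCast _ n, ← NNReal.rpow_mul,
                mul_one_div_cancel hnR, NNReal.rpow_one]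
          _ ≤ ((P : ℝ≥0) * ∏ i ∈ F, (g i x : ℝ≥0)) ^ ((1:ℝ)/n) :=
              NNReal.rpow_le_rpow h1 (by positivity)
      have holder := genHolder X F (fun i x => (g i x : ℝ≥0)) (fun _ => (1:ℝ)/n)
        (fun i _ => by positivity) (by
          rw [Finset.sum_const, ← hn, nsmul_eq_mul, mul_one_div_cancel hnR])
      have main : ((A.card : ℝ≥0)) ^ ((n : ℝ)) ≤ (P : ℝ≥0) * ∏ i ∈ F, (Q i : ℝ≥0) := by
        have chain : (A.card : ℝ≥0) ≤ ((P : ℝ≥0) * ∏ i ∈ F, (Q i : ℝ≥0)) ^ ((1:ℝ)/n) := by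
          calc (A.card : ℝ≥0) = ∑ x ∈ X, ((Ax x).card : ℝ≥0) := by exact_mod_cast f1
            _ ≤ ∑ x ∈ X, ((P : ℝ≥0) * ∏ i ∈ F, (g i x : ℝ≥0)) ^ ((1:ℝ)/n) :=
                Finset.sum_le_sum key
            _ = ∑ x ∈ X, (P : ℝ≥0) ^ ((1:ℝ)/n) * ∏ i ∈ F, (g i x : ℝ≥0) ^ ((1:ℝ)/n) := by
                refine Finset.sum_congr rfl fun x _ => ?_
                rw [NNReal.mul_rpow, NNReal.finset_prod_rpow]
            _ = (P : ℝ≥0) ^ ((1:ℝ)/n) * ∑ x ∈ X, ∏ i ∈ F, (g i x : ℝ≥0) ^ ((1:ℝ)/n) := by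
                rw [Finset.mul_sum]
            _ ≤ (P : ℝ≥0) ^ ((1:ℝ)/n) * ∏ i ∈ F, (∑ x ∈ X, (g i x : ℝ≥0)) ^ ((1:ℝ)/n) :=
                mul_le_mul_right holder _
            _ ≤ (P : ℝ≥0) ^ ((1:ℝ)/n) * ∏ i ∈ F, ((Q i : ℝ≥0)) ^ ((1:ℝ)/n) := by
                refine mul_le_mul_right (Finset.prod_le_prod' ?_) _
                intro i hi
                refine NNReal.rpow_le_rpow ?_ (by positivity)
                exact_mod_cast Nat.cast_le.2 (f5 i hi)
            _ = ((P : ℝ≥0) * ∏ i ∈ F, (Q i : ℝ≥0)) ^ ((1:ℝ)/n) := by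
                rw [NNReal.mul_rpow, NNReal.finset_prod_rpow]
        calc ((A.card : ℝ≥0)) ^ ((n:ℝ))
            ≤ (((P : ℝ≥0) * ∏ i ∈ F, (Q i : ℝ≥0)) ^ ((1:ℝ)/n)) ^ ((n:ℝ)) :=
              NNReal.rpow_le_rpow chain (by positivity)
          _ = (P : ℝ≥0) * ∏ i ∈ F, (Q i : ℝ≥0) := by
              rw [← NNReal.rpow_mul, one_div_mul_cancel hnR, NNReal.rpow_one]
      have mainN : A.card ^ n ≤ P * ∏ i ∈ F, Q i := by
        have := main
        rw [NNReal.rpow_natCast] at this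
        exact_mod_cast this
      rw [Finset.card_insert_of_notMem ha, Finset.prod_insert ha]
      calc A.card ^ (F.card + 1) = A.card * A.card ^ n := by rw [pow_succ, mul_comm]
        _ ≤ A.card * (P * ∏ i ∈ F, Q i) := Nat.mul_le_mul_left _ mainN
        _ = A.card * ((A.image (fun f => Function.update f a v₀)).card
            * ∏ i ∈ F, (A.image (fun f => Function.update f i v₀)).card) := rfl

lemma count_full {V : Type*} [DecidableEq V] {k : ℕ} (T : Finset V) (hT : T.card = k)
    (D : Finset (Fin k → V))
    (hD : ∀ g : Fin k → V, Function.Injective g → Finset.image g Finset.univ = T → g ∈ D) :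
    k.factorial ≤ D.card := by
  classical
  have him : ∀ e : Fin k ↪ {x // x ∈ T}, Finset.image (fun j => (e j : V)) Finset.univ = T := by
    intro e
    apply Finset.eq_of_subset_of_card_le
    · intro x hx
      obtain ⟨j, -, rfl⟩ := Finset.mem_image.1 hx
      exact (e j).2
    · rw [Finset.card_image_of_injective _ (fun j1 j2 h => e.injective (Subtype.ext h)),
        Finset.card_univ, Fintype.card_fin, hT]
  have h1 : Fintype.card (Fin k ↪ {x // x ∈ T}) ≤ Fintype.card {g // g ∈ D} := by
    refine Fintype.card_le_of_injective
      (fun e => ⟨fun j => (e j : V),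
        hD _ (fun j1 j2 h => e.injective (Subtype.ext h)) (him e)⟩) ?_
    intro e1 e2 h
    have h' := congrArg Subtype.val h
    ext j
    exact congrFun h' j
  have h2 : Fintype.card (Fin k ↪ {x // x ∈ T}) = k.factorial := by
    rw [Fintype.card_embedding_eq, Fintype.card_coe, hT, Fintype.card_fin,
      Nat.descFactorial_self]
  rw [← h2]
  simpa [Fintype.card_coe] using h1

lemma count_fiber {V : Type*} [DecidableEq V] {k : ℕ} (s : Finset V) (hs : s.card = k)
    (D : Finset (Fin k → V))
    (hD : ∀ g ∈ D, Function.Injective g ∧ Finset.image g Finset.univ = s) :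
    D.card ≤ k.factorial := by
  classical
  have h2 : Fintype.card (Fin k ↪ {x // x ∈ s}) = k.factorial := by
    rw [Fintype.card_embedding_eq, Fintype.card_coe, hs, Fintype.card_fin,
      Nat.descFactorial_self]
  rw [← h2, ← Fintype.card_coe D]
  refine Fintype.card_le_of_injective
    (fun g => ⟨fun j => ⟨g.1 j, by
        rw [← (hD g.1 g.2).2]; exact Finset.mem_image_of_mem _ (Finset.mem_univ j)⟩,
      fun j1 j2 h => (hD g.1 g.2).1 (congrArg Subtype.val h)⟩) ?_
  intro g1 g2 h
  apply Subtype.ext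
  funext j
  have h' := congrFun (congrArg (fun e : Fin k ↪ {x // x ∈ s} => (e : Fin k → {x // x ∈ s})) h) j
  exact congrArg Subtype.val h'

/-- Kruskal–Katona covering bound: a family `S` of `(ℓ−1)`-subsets covers at most
`((ℓ−1)!·|S|)^(ℓ/(ℓ−1))/ℓ!` many `ℓ`-sets, where an `ℓ`-set is covered if all of its
`(ℓ−1)`-subsets lie in `S`. -/
theorem stmt_16 (ℓ : ℕ) (hℓ : 2 ≤ ℓ) (V : Type*) [DecidableEq V] [Fintype V]
    (S : Finset (Finset V)) (hS : ∀ s ∈ S, s.card = ℓ - 1) :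
    ({T : Finset V | T.card = ℓ ∧ ∀ s ⊆ T, s.card = ℓ - 1 → s ∈ S}.ncard : ℝ)
      ≤ ((Nat.factorial (ℓ - 1) : ℝ) * (S.card : ℝ)) ^ ((ℓ : ℝ) / ((ℓ : ℝ) - 1))
          / (Nat.factorial ℓ : ℝ) := by
  classical
  obtain ⟨k, rfl⟩ : ∃ k, ℓ = k + 2 := ⟨ℓ - 2, by omega⟩
  have hk1 : k + 2 - 1 = k + 1 := rfl
  rw [hk1]
  rw [hk1] at hS
  rcases isEmpty_or_nonempty V with hV | hV
  · have hempty : {T : Finset V | T.card = k + 2 ∧ ∀ s ⊆ T, s.card = k + 1 → s ∈ S} = ∅ := by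
      ext T
      simp only [Set.mem_setOf_eq, Set.mem_empty_iff_false, iff_false, not_and]
      intro hc
      exfalso
      have : T = ∅ := Finset.eq_empty_of_isEmpty T
      rw [this] at hc
      simp at hc
    rw [hempty]
    simp only [Set.ncard_empty, Nat.cast_zero]
    positivity
  obtain ⟨v₀⟩ := hV
  set 𝒯 : Finset (Finset V) :=
    univ.filter (fun T : Finset V => T.card = k + 2 ∧ ∀ s ⊆ T, s.card = k + 1 → s ∈ S) with h𝒯
  have hset : {T : Finset V | T.card = k + 2 ∧ ∀ s ⊆ T, s.card = k + 1 → s ∈ S} = ↑𝒯 := by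
    ext T; simp [h𝒯]
  rw [hset, Set.ncard_coe_finset]
  set A : Finset (Fin (k + 2) → V) :=
    univ.filter (fun f => Function.Injective f ∧ Finset.image f univ ∈ 𝒯) with hA
  -- lower bound
  have hlow : (k + 2).factorial * 𝒯.card ≤ A.card := by
    have hfib : A.card = ∑ T ∈ 𝒯, (A.filter (fun f => Finset.image f univ = T)).card :=
      Finset.card_eq_sum_card_fiberwise (fun f hf => (Finset.mem_filter.1 hf).2.2)
    rw [hfib]
    rw [mul_comm]
    calc 𝒯.card * (k + 2).factorial = ∑ _T ∈ 𝒯, (k + 2).factorial := by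
          rw [Finset.sum_const, smul_eq_mul]
      _ ≤ ∑ T ∈ 𝒯, (A.filter (fun f => Finset.image f univ = T)).card := by
        refine Finset.sum_le_sum (fun T hT => ?_)
        have hTc : T.card = k + 2 := ((Finset.mem_filter.1 hT).2).1
        refine count_full T hTc _ (fun g hginj hgim => ?_)
        refine Finset.mem_filter.2 ⟨Finset.mem_filter.2 ⟨Finset.mem_univ _, hginj, ?_⟩, hgim⟩
        rw [hgim]; exact hT
  -- upper bound on projections
  have hup : ∀ i : Fin (k + 2),
      (A.image (fun f => Function.update f i v₀)).card ≤ (k + 1).factorial * S.card := by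
    intro i
    set π := A.image (fun f => Function.update f i v₀) with hπ
    have hmem : ∀ h ∈ π, Finset.image (h ∘ i.succAbove) univ ∈ S ∧
        Function.Injective (h ∘ i.succAbove) ∧ h i = v₀ := by
      intro h hh
      obtain ⟨f, hf, rfl⟩ := Finset.mem_image.1 hh
      obtain ⟨-, finj, fim⟩ := Finset.mem_filter.1 hf
      have hdc : (Function.update f i v₀) ∘ i.succAbove = f ∘ i.succAbove := by
        funext j
        exact Function.update_of_ne (Fin.succAbove_ne i j) _ _
      obtain ⟨hTcard, hTcov⟩ := (Finset.mem_filter.1 fim).2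
      have hcompinj : Function.Injective (f ∘ i.succAbove) :=
        finj.comp (Fin.succAbove_right_injective)
      refine ⟨?_, ?_, Function.update_self i v₀ f⟩
      · rw [hdc]
        apply hTcov
        · intro x hx
          obtain ⟨j, -, rfl⟩ := Finset.mem_image.1 hx
          exact Finset.mem_image_of_mem f (Finset.mem_univ _)
        · rw [Finset.card_image_of_injective _ hcompinj, Finset.card_univ, Fintype.card_fin]
      · rw [hdc]; exact hcompinj
    have hfib : π.card = ∑ s ∈ S,
        (π.filter (fun h => Finset.image (h ∘ i.succAbove) univ = s)).card :=
      Finset.card_eq_sum_card_fiberwise (fun h hh => (hmem h hh).1)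
    rw [hfib]
    calc ∑ s ∈ S, (π.filter (fun h => Finset.image (h ∘ i.succAbove) univ = s)).card
        ≤ ∑ _s ∈ S, (k + 1).factorial := by
          refine Finset.sum_le_sum (fun s hs' => ?_)
          set fib := π.filter (fun h => Finset.image (h ∘ i.succAbove) univ = s) with hfibdef
          have e1 : (fib.image (fun h => h ∘ i.succAbove)).card = fib.card := by
            apply Finset.card_image_of_injOn
            intro h1 hh1 h2 hh2 heq
            have m1 := hmem h1 (Finset.mem_of_mem_filter _ hh1)
            have m2 := hmem h2 (Finset.mem_of_mem_filter _ hh2)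
            funext j
            rcases eq_or_ne j i with rfl | hj
            · rw [m1.2.2, m2.2.2]
            · obtain ⟨j', rfl⟩ := Fin.exists_succAbove_eq hj
              exact congrFun heq j'
          rw [← e1]
          refine count_fiber s (hS s hs') _ (fun g hg => ?_)
          obtain ⟨h, hh, rfl⟩ := Finset.mem_image.1 hg
          have hm := hmem h (Finset.mem_of_mem_filter _ hh)
          exact ⟨hm.2.1, (Finset.mem_filter.1 hh).2⟩
      _ = (k + 1).factorial * S.card := by rw [Finset.sum_const, smul_eq_mul, mul_comm]
  -- combine with LW
  rcases Nat.eq_zero_or_pos 𝒯.card with h𝒯0 | h𝒯pos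
  · rw [h𝒯0]
    simp only [Nat.cast_zero]
    positivity
  have hAne : A.Nonempty := by
    rw [← Finset.card_pos]
    calc 0 < (k + 2).factorial * 𝒯.card :=
      Nat.mul_pos (Nat.factorial_pos _) h𝒯pos
      _ ≤ A.card := hlow
  have hLW := LW v₀ (univ : Finset (Fin (k + 2))) A hAne
  rw [Finset.card_univ, Fintype.card_fin] at hLW
  set B := (k + 1).factorial * S.card with hB
  have hprod : ∏ i : Fin (k + 2), (A.image (fun f => Function.update f i v₀)).card
      ≤ B ^ (k + 2) := by
    calc ∏ i : Fin (k + 2), (A.image (fun f => Function.update f i v₀)).card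
        ≤ ∏ _i : Fin (k + 2), B := Finset.prod_le_prod' (fun i _ => hup i)
      _ = B ^ (k + 2) := by rw [Finset.prod_const, Finset.card_univ, Fintype.card_fin]
  have hstep : A.card ^ (k + 1) ≤ B ^ (k + 2) := by
    have h1 : A.card * A.card ^ (k + 1) ≤ A.card * B ^ (k + 2) := by
      calc A.card * A.card ^ (k + 1) = A.card ^ (k + 2) := by ring
        _ ≤ A.card * ∏ i : Fin (k + 2), (A.image (fun f => Function.update f i v₀)).card := hLW
        _ ≤ A.card * B ^ (k + 2) := Nat.mul_le_mul_left _ hprod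
    exact Nat.le_of_mul_le_mul_left h1 (Finset.card_pos.2 hAne)
  have hkey : ((k + 2).factorial * 𝒯.card) ^ (k + 1) ≤ B ^ (k + 2) :=
    le_trans (Nat.pow_le_pow_left hlow _) hstep
  -- real arithmetic
  have hcast : (((k + 2).factorial * 𝒯.card : ℕ) : ℝ) ^ (k + 1) ≤ ((B : ℕ) : ℝ) ^ (k + 2) := by
    exact_mod_cast hkey
  set x : ℝ := (((k + 2).factorial * 𝒯.card : ℕ) : ℝ) with hx
  set y : ℝ := ((B : ℕ) : ℝ) with hy
  have hx0 : 0 ≤ x := Nat.cast_nonneg _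
  have hy0 : 0 ≤ y := Nat.cast_nonneg _
  have hk1R : ((k : ℝ) + 1) ≠ 0 := by positivity
  have hxy : x ≤ y ^ (((k : ℝ) + 2) / ((k : ℝ) + 1)) := by
    have h2 : (x ^ (k + 1 : ℕ)) ^ (((k : ℝ) + 1)⁻¹) ≤ (y ^ (k + 2 : ℕ)) ^ (((k : ℝ) + 1)⁻¹) :=
      Real.rpow_le_rpow (by positivity) hcast (by positivity)
    calc x = (x ^ (k + 1 : ℕ)) ^ (((k : ℝ) + 1)⁻¹) := by
          rw [← Real.rpow_natCast x (k + 1), ← Real.rpow_mul hx0]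
          push_cast
          rw [mul_inv_cancel₀ hk1R, Real.rpow_one]
      _ ≤ (y ^ (k + 2 : ℕ)) ^ (((k : ℝ) + 1)⁻¹) := h2
      _ = y ^ (((k : ℝ) + 2) / ((k : ℝ) + 1)) := by
          rw [← Real.rpow_natCast y (k + 2), ← Real.rpow_mul hy0]
          push_cast
          rw [div_eq_mul_inv]
  have hexp : ((k : ℝ) + 2) / ((k : ℝ) + 1) = ((k + 2 : ℕ) : ℝ) / (((k + 2 : ℕ) : ℝ) - 1) := by
    push_cast; ring_nf
  have hybase : y = ((k + 1).factorial : ℝ) * (S.card : ℝ) := by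
    rw [hy, hB]; push_cast; ring
  rw [← hexp, ← hybase]
  rw [le_div_iff₀ (by positivity : (0 : ℝ) < ((k + 2).factorial : ℝ))]
  calc (𝒯.card : ℝ) * ((k + 2).factorial : ℝ) = x := by rw [hx]; push_cast; ring
    _ ≤ y ^ (((k : ℝ) + 2) / ((k : ℝ) + 1)) := hxy
end
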